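/- arXiv:2202.00081 — 7 statements merged into one kernel-verified Lean document; each statement's English description precedes it below -/
import Mathlib

section
/- Let 0 < γ < 1 and let (X_t)_{t≥0} be i.i.d. real-valued random variables with E[log⁺|X_0|] < ∞. Then the series ∑_{t=0}^∞ γ^t X_t converges absolutely almost surely. -/
open MeasureTheory ProbabilityTheory Filter

/-- `log⁺ x = max (log x) 0`. -/
noncomputable def posLog (x : ℝ) : ℝ := max (Real.log x) 0

theorem stmt0
    {Ω : Type*} [MeasureSpace Ω] [IsProbabilityMeasure (ℙ : Measure Ω)]
    (γ : ℝ) (hγ0 : 0 < γ) (hγ1 : γ < 1)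
    (X : ℕ → Ω → ℝ) (hmeas : ∀ t, Measurable (X t))
    (hindep : iIndepFun X ℙ)
    (hident : ∀ t, IdentDistrib (X t) (X 0) ℙ ℙ)
    (hlog : Integrable (fun ω => posLog |X 0 ω|) ℙ) :
    ∀ᵐ ω ∂(ℙ : Measure Ω), Summable (fun t => γ ^ t * |X t ω|) := by
  have hlogγ : Real.log γ < 0 := Real.log_neg hγ0 hγ1
  set c : ℝ := -Real.log γ / 2 with hc
  have hcpos : 0 < c := by simp only [hc]; linarith
  -- measurability of posLog ∘ |X t| / c
  have hposLog : Measurable posLog := by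
    unfold posLog
    exact Real.measurable_log.max measurable_const
  have hg : Measurable fun x : ℝ => posLog |x| / c :=
    (hposLog.comp measurable_abs).div_const c
  -- tail sum finite
  have htail : (∑' t : ℕ, ℙ {ω | posLog |X 0 ω| / c ∈ Set.Ioi (t : ℝ)}) < ⊤ := by
    apply tsum_prob_mem_Ioi_lt_top (hlog.div_const c)
    intro ω
    have : (0:ℝ) ≤ posLog |X 0 ω| := le_max_right _ _
    positivity
  -- events
  set A : ℕ → Set Ω := fun t => {ω | posLog |X t ω| / c ∈ Set.Ioi (t : ℝ)} with hA
  have hAmeas : ∀ t, MeasurableSet {x : ℝ | posLog |x| / c ∈ Set.Ioi (t : ℝ)} := by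
    intro t
    exact hg measurableSet_Ioi
  have hAeq : ∀ t, ℙ (A t) = ℙ {ω | posLog |X 0 ω| / c ∈ Set.Ioi (t : ℝ)} := by
    intro t
    exact (hident t).measure_mem_eq (hAmeas t)
  have hsum : (∑' t, ℙ (A t)) ≠ ⊤ := by
    rw [tsum_congr hAeq]
    exact htail.ne
  have hBC := MeasureTheory.ae_eventually_notMem hsum
  filter_upwards [hBC] with ω hω
  -- eventually γ^t * |X t ω| ≤ r^t
  set r : ℝ := γ * Real.exp c with hr
  have hr0 : 0 ≤ r := by positivity
  have hr1 : r < 1 := by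
    rw [hr, show γ = Real.exp (Real.log γ) from (Real.exp_log hγ0).symm,
      ← Real.exp_add, ← Real.exp_zero]
    exact Real.exp_lt_exp.2 (by simp only [hc]; linarith)
  have hrs : Summable fun t : ℕ => r ^ t := summable_geometric_of_lt_one hr0 hr1
  apply summable_of_isBigO_nat hrs
  apply Asymptotics.IsBigO.of_bound 1
  filter_upwards [hω] with t ht
  have ht' : posLog |X t ω| ≤ c * t := by
    simp only [hA, Set.mem_setOf_eq, Set.mem_Ioi, not_lt] at ht
    calc posLog |X t ω| = posLog |X t ω| / c * c := by field_simp
    _ ≤ (t : ℝ) * c := by apply mul_le_mul_of_nonneg_right ht hcpos.le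
    _ = c * t := mul_comm _ _
  have hXle : |X t ω| ≤ Real.exp (c * t) := by
    rcases le_or_gt (|X t ω|) 1 with h | h
    · exact h.trans (Real.one_le_exp (by positivity))
    · have hlog' : Real.log |X t ω| ≤ c * t := (le_max_left _ _).trans ht'
      calc |X t ω| = Real.exp (Real.log |X t ω|) :=
            (Real.exp_log (by linarith)).symm
      _ ≤ Real.exp (c * t) := Real.exp_le_exp.2 hlog'
  have hb : γ ^ t * |X t ω| ≤ r ^ t := by
    have : γ ^ t * |X t ω| ≤ γ ^ t * Real.exp (c * t) :=
      mul_le_mul_of_nonneg_left hXle (by positivity)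
    calc γ ^ t * |X t ω| ≤ γ ^ t * Real.exp (c * t) := this
    _ = r ^ t := by rw [hr, mul_pow, ← Real.exp_nat_mul, mul_comm (t:ℝ) c]
  have hnn : 0 ≤ γ ^ t * |X t ω| := by positivity
  rw [Real.norm_eq_abs, Real.norm_eq_abs, abs_of_nonneg hnn, abs_of_nonneg (by positivity : (0:ℝ) ≤ r ^ t), one_mul]
  exact hb
end

section
/- Let 0 < γ < 1 and let (X_t)_{t≥0} be i.i.d. real-valued random variables with E[log⁺|X_0|] = ∞. Then the series ∑_{t=0}^∞ γ^t X_t diverges almost surely (i.e., the partial sums almost surely fail to converge to a finite limit). -/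
open MeasureTheory ProbabilityTheory Filter

lemma tsum_meas_nat_le_eq_top {Ω : Type*} [MeasurableSpace Ω] {μ : Measure Ω}
    {g : Ω → ℝ} (hg : Measurable g)
    (h : ∫⁻ ω, ENNReal.ofReal (g ω) ∂μ = ⊤) :
    ∑' n : ℕ, μ {ω | (n : ℝ) ≤ g ω} = ⊤ := by
  have hmeas : ∀ n : ℕ, MeasurableSet {ω | (n : ℝ) ≤ g ω} := fun n =>
    measurableSet_le measurable_const hg
  have key : ∀ ω, ENNReal.ofReal (g ω) ≤
      ∑' n : ℕ, ({ω | (n : ℝ) ≤ g ω}).indicator (fun _ => (1 : ENNReal)) ω := by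
    intro ω
    calc ENNReal.ofReal (g ω) ≤ (⌈g ω⌉₊ : ENNReal) := by
          rw [← ENNReal.ofReal_natCast]
          exact ENNReal.ofReal_le_ofReal (Nat.le_ceil _)
      _ = ∑ n ∈ Finset.range ⌈g ω⌉₊, (1 : ENNReal) := by simp
      _ ≤ ∑ n ∈ Finset.range ⌈g ω⌉₊,
            ({ω | (n : ℝ) ≤ g ω}).indicator (fun _ => (1 : ENNReal)) ω := by
          refine Finset.sum_le_sum fun n hn => ?_
          have : (n : ℝ) ≤ g ω := le_of_lt (Nat.lt_ceil.mp (Finset.mem_range.mp hn))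
          simp [Set.indicator_of_mem, this]
      _ ≤ _ := ENNReal.sum_le_tsum _
  have h2 : (⊤ : ENNReal) ≤ ∑' n : ℕ, μ {ω | (n : ℝ) ≤ g ω} := by
    calc (⊤ : ENNReal) = ∫⁻ ω, ENNReal.ofReal (g ω) ∂μ := h.symm
      _ ≤ ∫⁻ ω, ∑' n : ℕ, ({ω | (n : ℝ) ≤ g ω}).indicator (fun _ => (1 : ENNReal)) ω ∂μ :=
          lintegral_mono key
      _ = ∑' n : ℕ, ∫⁻ ω, ({ω | (n : ℝ) ≤ g ω}).indicator (fun _ => (1 : ENNReal)) ω ∂μ :=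
          lintegral_tsum fun n => ((measurable_const.indicator (hmeas n))).aemeasurable
      _ = ∑' n : ℕ, μ {ω | (n : ℝ) ≤ g ω} := by
          congr 1; ext n
          exact lintegral_indicator_one (hmeas n)
  exact top_le_iff.mp h2

theorem stmt1
    {Ω : Type*} [MeasureSpace Ω] [IsProbabilityMeasure (ℙ : Measure Ω)]
    (γ : ℝ) (hγ0 : 0 < γ) (hγ1 : γ < 1)
    (X : ℕ → Ω → ℝ) (hmeas : ∀ t, Measurable (X t))
    (hindep : iIndepFun X ℙ)
    (hident : ∀ t, IdentDistrib (X t) (X 0) ℙ ℙ)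
    (hlog : ∫⁻ ω, ENNReal.ofReal (posLog |X 0 ω|) ∂(ℙ : Measure Ω) = ⊤) :
    ∀ᵐ ω ∂(ℙ : Measure Ω),
      ¬ ∃ l : ℝ, Tendsto (fun n => ∑ t ∈ Finset.range n, γ ^ t * X t ω) atTop (nhds l) := by
  -- the constant c = log (γ⁻¹) > 0
  set c : ℝ := Real.log γ⁻¹ with hc
  have hc0 : 0 < c := Real.log_pos (one_lt_inv_iff₀.mpr ⟨hγ0, hγ1⟩)
  -- the rescaled function g
  set g : Ω → ℝ := fun ω => posLog |X 0 ω| / c with hgdef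
  have hposLog_nonneg : ∀ x : ℝ, 0 ≤ posLog x := fun x => le_max_right _ _
  have hmg : Measurable g := by
    have : Measurable fun ω => posLog |X 0 ω| :=
      (Real.measurable_log.comp (hmeas 0).abs).max measurable_const
    exact this.div_const c
  -- the integral of g is infinite
  have hig : ∫⁻ ω, ENNReal.ofReal (g ω) ∂(ℙ : Measure Ω) = ⊤ := by
    have heq : ∀ ω, ENNReal.ofReal (g ω)
        = ENNReal.ofReal (posLog |X 0 ω|) * ENNReal.ofReal c⁻¹ := by
      intro ω
      rw [hgdef]
      simp only [div_eq_mul_inv]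
      exact ENNReal.ofReal_mul (hposLog_nonneg _)
    have hm0 : Measurable fun ω => posLog |X 0 ω| := by
      unfold posLog; exact ((hmeas 0).abs.log).max measurable_const
    rw [lintegral_congr heq, lintegral_mul_const _ hm0.ennreal_ofReal,
      hlog, ENNReal.top_mul]
    simp only [ne_eq, ENNReal.ofReal_eq_zero, not_le]
    exact inv_pos.mpr hc0
  have htsum : ∑' n : ℕ, (ℙ : Measure Ω) {ω | (n : ℝ) ≤ g ω} = ⊤ :=
    tsum_meas_nat_le_eq_top hmg hig
  -- the events
  set s : ℕ → Set Ω := fun n => {ω | 1 ≤ γ ^ n * |X n ω|} with hs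
  set B : ℕ → Set ℝ := fun n => {x | 1 ≤ γ ^ n * |x|} with hB
  have hBmeas : ∀ n, MeasurableSet (B n) :=
    fun n => measurableSet_le measurable_const (measurable_const.mul measurable_abs)
  have hspre : ∀ n, s n = X n ⁻¹' B n := fun n => rfl
  have hsmeas : ∀ n, MeasurableSet (s n) := fun n => (hmeas n) (hBmeas n)
  -- identical distribution transfer
  have hmeaseq : ∀ n, (ℙ : Measure Ω) (s n) = (ℙ : Measure Ω) {ω | 1 ≤ γ ^ n * |X 0 ω|} := by
    intro n
    have := (hident n).measure_mem_eq (hBmeas n)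
    exact this
  -- inclusion: {n+1 ≤ g} ⊆ {1 ≤ γ^n |X 0|}
  have hincl : ∀ n : ℕ, {ω | ((n + 1 : ℕ) : ℝ) ≤ g ω} ⊆ {ω | 1 ≤ γ ^ n * |X 0 ω|} := by
    intro n ω hω
    simp only [Set.mem_setOf_eq] at hω ⊢
    have h1 : ((n + 1 : ℕ) : ℝ) * c ≤ posLog |X 0 ω| := by
      rw [hgdef] at hω
      calc ((n + 1 : ℕ) : ℝ) * c ≤ (posLog |X 0 ω| / c) * c := by
            exact mul_le_mul_of_nonneg_right hω hc0.le
        _ = posLog |X 0 ω| := div_mul_cancel₀ _ hc0.ne'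
    have hpos : 0 < ((n + 1 : ℕ) : ℝ) * c := by positivity
    have hlog1 : ((n + 1 : ℕ) : ℝ) * c ≤ Real.log |X 0 ω| := by
      have h1' : ((n + 1 : ℕ) : ℝ) * c ≤ max (Real.log |X 0 ω|) 0 := h1
      rcases le_max_iff.mp h1' with h | h
      · exact h
      · linarith
    have hnc : (n : ℝ) * c ≤ Real.log |X 0 ω| := by
      have : (n : ℝ) * c ≤ ((n + 1 : ℕ) : ℝ) * c := by
        apply mul_le_mul_of_nonneg_right _ hc0.le
        push_cast; linarith
      linarith
    have hXpos : 1 < |X 0 ω| := by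
      by_contra h
      push_neg at h
      have : Real.log |X 0 ω| ≤ 0 := Real.log_nonpos (abs_nonneg _) h
      linarith
    -- n * c = log ((γ⁻¹)^n)
    have hlogpow : Real.log ((γ⁻¹) ^ n) = (n : ℝ) * c := by
      rw [Real.log_pow]
    have hge : (γ⁻¹) ^ n ≤ |X 0 ω| := by
      have hγipos : (0 : ℝ) < (γ⁻¹) ^ n := by positivity
      rw [← Real.exp_log hγipos, ← Real.exp_log (by linarith : (0:ℝ) < |X 0 ω|)]
      exact Real.exp_le_exp.mpr (by rw [hlogpow]; linarith)
    calc (1 : ℝ) = γ ^ n * (γ⁻¹) ^ n := by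
          rw [← mul_pow, mul_inv_cancel₀ hγ0.ne', one_pow]
      _ ≤ γ ^ n * |X 0 ω| := by
          exact mul_le_mul_of_nonneg_left hge (by positivity)
  -- sum of measures of s n is infinite
  have hsum : ∑' n : ℕ, (ℙ : Measure Ω) (s n) = ⊤ := by
    have hshift : ∑' n : ℕ, (ℙ : Measure Ω) {ω | ((n + 1 : ℕ) : ℝ) ≤ g ω} = ⊤ :=
      ENNReal.tsum_add_one_eq_top htsum (measure_ne_top _ _)
    refine top_le_iff.mp ?_
    rw [← hshift]
    refine ENNReal.tsum_le_tsum fun n => ?_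
    rw [hmeaseq n]
    exact measure_mono (hincl n)
  -- independence of the events
  have hiind : iIndepSet s (ℙ : Measure Ω) := by
    rw [iIndepSet_iff_meas_biInter hsmeas]
    intro S
    have := hindep.measure_inter_preimage_eq_mul S (sets := B) (fun i _ => hBmeas i)
    simpa [hspre] using this
  -- Borel–Cantelli II
  have hBC : (ℙ : Measure Ω) (limsup s atTop) = 1 :=
    measure_limsup_eq_one hsmeas hiind hsum
  have hae : ∀ᵐ ω ∂(ℙ : Measure Ω), ω ∈ limsup s atTop := by
    have hms : MeasurableSet (limsup s atTop) := MeasurableSet.measurableSet_limsup hsmeas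
    rw [ae_iff]
    have : {ω | ¬ ω ∈ limsup s atTop} = (limsup s atTop)ᶜ := rfl
    rw [this, prob_compl_eq_zero_iff hms]
    exact hBC
  filter_upwards [hae] with ω hω
  rintro ⟨l, hl⟩
  -- terms tend to 0
  have hterm : Tendsto (fun n => γ ^ n * X n ω) atTop (nhds 0) := by
    have h1 : Tendsto (fun n => ∑ t ∈ Finset.range (n + 1), γ ^ t * X t ω
        - ∑ t ∈ Finset.range n, γ ^ t * X t ω) atTop (nhds (l - l)) :=
      ((hl.comp (tendsto_add_atTop_nat 1)).sub hl)
    simp only [sub_self] at h1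
    refine h1.congr fun n => ?_
    rw [Finset.sum_range_succ]
    ring
  have hev : ∀ᶠ n in atTop, |γ ^ n * X n ω| < 1 := by
    have := hterm.abs
    rw [abs_zero] at this
    exact this.eventually_lt_const one_pos
  have hfreq : ∃ᶠ n in atTop, ω ∈ s n := mem_limsup_iff_frequently_mem.mp hω
  rcases (hfreq.and_eventually hev).exists with ⟨n, hn1, hn2⟩
  have : 1 ≤ γ ^ n * |X n ω| := hn1
  rw [abs_mul, abs_of_pos (by positivity : (0:ℝ) < γ ^ n)] at hn2
  linarith
end

section
/- Let 0 < γ < 1, β > 0 and let (X_t)_{t≥0} be independent real-valued random variables such that there is a constant c(β) < ∞ with E[exp(β|X_t|)] ≤ c(β) for all t. Then the series S = ∑_{t=0}^∞ γ^t X_t converges absolutely almost surely and E[exp(β|S|)] ≤ c(β)^{1/(1-γ)} < ∞. -/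
open MeasureTheory ProbabilityTheory Filter
open scoped ENNReal

/-- Jensen's inequality for `x ↦ x ^ p`, `0 < p ≤ 1`, on a probability space. -/
lemma my_jensen_rpow {α : Type*} [MeasurableSpace α] {μ : Measure α} [IsProbabilityMeasure μ]
    {f : α → ℝ≥0∞} (hf : AEMeasurable f μ) {p : ℝ} (hp0 : 0 < p) (hp1 : p ≤ 1) :
    ∫⁻ a, f a ^ p ∂μ ≤ (∫⁻ a, f a ∂μ) ^ p := by
  rcases eq_or_lt_of_le hp1 with h1 | h1
  · simp [h1]
  · have hpq : (1/p).HolderConjugate (1/(1-p)) := by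
      constructor
      · simp only [one_div, inv_inv, inv_one]; ring
      · positivity
      · have : 0 < 1 - p := by linarith
        positivity
    have h := ENNReal.lintegral_mul_le_Lp_mul_Lq μ hpq
      (hf.pow_const p) (aemeasurable_const : AEMeasurable (fun _ => (1:ℝ≥0∞)) μ)
    have hfp : ∀ a, (f a ^ p) ^ (1/p) = f a := by
      intro a
      rw [← ENNReal.rpow_mul, mul_one_div_cancel hp0.ne', ENNReal.rpow_one]
    simp only [Pi.mul_apply, mul_one, ENNReal.one_rpow, lintegral_one, measure_univ,
      one_div_one_div, hfp] at h
    simpa using h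

theorem stmt4
    {Ω : Type*} [MeasureSpace Ω] [IsProbabilityMeasure (ℙ : Measure Ω)]
    (γ : ℝ) (hγ0 : 0 < γ) (hγ1 : γ < 1)
    (β : ℝ) (hβ : 0 < β)
    (X : ℕ → Ω → ℝ) (hmeas : ∀ t, Measurable (X t))
    (hindep : iIndepFun X ℙ)
    (cβ : ℝ)
    (hexp : ∀ t, ∫ ω, Real.exp (β * |X t ω|) ∂(ℙ : Measure Ω) ≤ cβ)
    (hexpInt : ∀ t, Integrable (fun ω => Real.exp (β * |X t ω|)) ℙ) :
    (∀ᵐ ω ∂(ℙ : Measure Ω), Summable (fun t => γ ^ t * |X t ω|)) ∧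
    ∫⁻ ω, ENNReal.ofReal (Real.exp (β * |∑' t, γ ^ t * X t ω|)) ∂(ℙ : Measure Ω)
      ≤ ENNReal.ofReal (cβ ^ ((1 : ℝ) / (1 - γ))) := by
  have hγt : ∀ t : ℕ, (0:ℝ) < γ ^ t := fun t => pow_pos hγ0 t
  have hγt1 : ∀ t : ℕ, γ ^ t ≤ 1 := fun t => pow_le_one₀ hγ0.le hγ1.le
  -- cβ ≥ 1
  have hc1 : (1:ℝ) ≤ cβ := by
    refine le_trans ?_ (hexp 0)
    calc (1:ℝ) = ∫ _ : Ω, (1:ℝ) ∂(ℙ : Measure Ω) := by simp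
    _ ≤ ∫ ω, Real.exp (β * |X 0 ω|) ∂(ℙ : Measure Ω) :=
        integral_mono (integrable_const 1) (hexpInt 0)
          (fun ω => by simpa using Real.one_le_exp (by positivity))
  have hc0 : (0:ℝ) < cβ := lt_of_lt_of_le one_pos hc1
  -- the functions g t ω = exp(β γ^t |X t ω|) as ENNReal
  set g : ℕ → Ω → ℝ≥0∞ := fun t ω => ENNReal.ofReal (Real.exp (β * (γ ^ t * |X t ω|))) with hg_def
  have hgmeas : ∀ t, Measurable (g t) := fun t =>
    ENNReal.measurable_ofReal.comp (Real.measurable_exp.comp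
      (measurable_const.mul ((measurable_const.mul (hmeas t).abs))))
  have hFmeas : ∀ t, Measurable (fun ω => ENNReal.ofReal (Real.exp (β * |X t ω|))) := fun t =>
    ENNReal.measurable_ofReal.comp (Real.measurable_exp.comp (measurable_const.mul (hmeas t).abs))
  -- E[F t] ≤ cβ
  have hF_le : ∀ t, ∫⁻ ω, ENNReal.ofReal (Real.exp (β * |X t ω|)) ∂(ℙ : Measure Ω)
      ≤ ENNReal.ofReal cβ := by
    intro t
    rw [← ofReal_integral_eq_lintegral_ofReal (hexpInt t)
      (Filter.Eventually.of_forall fun ω => (Real.exp_pos _).le)]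
    exact ENNReal.ofReal_le_ofReal (hexp t)
  -- Jensen: E[g t] ≤ cβ ^ (γ^t)
  have hg_le : ∀ t, ∫⁻ ω, g t ω ∂(ℙ : Measure Ω) ≤ ENNReal.ofReal cβ ^ (γ ^ t) := by
    intro t
    have heq : ∀ ω, g t ω = (ENNReal.ofReal (Real.exp (β * |X t ω|))) ^ (γ ^ t) := by
      intro ω
      simp only [hg_def]
      have : β * (γ ^ t * |X t ω|) = (β * |X t ω|) * γ ^ t := by ring
      rw [this, Real.exp_mul, ENNReal.ofReal_rpow_of_pos (Real.exp_pos _)]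
    simp_rw [heq]
    calc ∫⁻ ω, (ENNReal.ofReal (Real.exp (β * |X t ω|))) ^ (γ ^ t) ∂(ℙ : Measure Ω)
        ≤ (∫⁻ ω, ENNReal.ofReal (Real.exp (β * |X t ω|)) ∂(ℙ : Measure Ω)) ^ (γ ^ t) :=
          my_jensen_rpow (hFmeas t).aemeasurable (hγt t) (hγt1 t)
      _ ≤ ENNReal.ofReal cβ ^ (γ ^ t) := ENNReal.rpow_le_rpow (hF_le t) (hγt t).le
  -- independence of the g's
  have hgindep : iIndepFun g ℙ := by
    have := hindep.comp (fun t (x : ℝ) => ENNReal.ofReal (Real.exp (β * (γ ^ t * |x|))))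
      (fun t => ENNReal.measurable_ofReal.comp (Real.measurable_exp.comp
        (measurable_const.mul (measurable_const.mul measurable_abs))))
    exact this
  -- product of expectations
  have hprod : ∀ n, ∫⁻ ω, ∏ t ∈ Finset.range n, g t ω ∂(ℙ : Measure Ω)
      = ∏ t ∈ Finset.range n, ∫⁻ ω, g t ω ∂(ℙ : Measure Ω) := by
    intro n
    induction n with
    | zero => simp
    | succ n ih =>
      simp_rw [Finset.prod_range_succ]
      rw [← ih]
      have hmf : Measurable (fun ω => ∏ t ∈ Finset.range n, g t ω) := by
        apply Finset.measurable_prod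
        exact fun t _ => hgmeas t
      have hind := hgindep.indepFun_prod_range_succ hgmeas n
      have := lintegral_mul_eq_lintegral_mul_lintegral_of_indepFun (μ := (ℙ : Measure Ω))
        (f := fun ω => ∏ t ∈ Finset.range n, g t ω) (g := g n) hmf (hgmeas n) ?_
      · exact this
      · convert hind using 2
        simp [Finset.prod_apply]
  have hcβ0 : ENNReal.ofReal cβ ≠ 0 := by
    simp [ENNReal.ofReal_eq_zero, not_le, hc0]
  have hcβtop : ENNReal.ofReal cβ ≠ ⊤ := ENNReal.ofReal_ne_top
  -- bound the product by cβ ^ (partial geometric sum)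
  have hsum_le : ∀ n, ∑ t ∈ Finset.range n, γ ^ t ≤ 1 / (1 - γ) := by
    intro n
    rw [one_div]
    rw [← tsum_geometric_of_lt_one hγ0.le hγ1]
    exact Summable.sum_le_tsum (Finset.range n) (fun t _ => (hγt t).le)
      (summable_geometric_of_lt_one hγ0.le hγ1)
  have hprod_le : ∀ n, ∏ t ∈ Finset.range n, ∫⁻ ω, g t ω ∂(ℙ : Measure Ω)
      ≤ ENNReal.ofReal cβ ^ ((1:ℝ) / (1 - γ)) := by
    intro n
    calc ∏ t ∈ Finset.range n, ∫⁻ ω, g t ω ∂(ℙ : Measure Ω)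
        ≤ ∏ t ∈ Finset.range n, ENNReal.ofReal cβ ^ (γ ^ t) :=
          Finset.prod_le_prod' fun t _ => hg_le t
      _ = ENNReal.ofReal cβ ^ (∑ t ∈ Finset.range n, γ ^ t) := by
          induction n with
          | zero => simp
          | succ n ih =>
            rw [Finset.prod_range_succ, Finset.sum_range_succ, ih,
              ← ENNReal.rpow_add _ _ hcβ0 hcβtop]
      _ ≤ ENNReal.ofReal cβ ^ ((1:ℝ) / (1 - γ)) :=
          ENNReal.rpow_le_rpow_of_exponent_le (ENNReal.one_le_ofReal.mpr hc1) (hsum_le n)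
  -- a.s. summability
  have habs_meas : ∀ t, Measurable (fun ω => ENNReal.ofReal (γ ^ t * |X t ω|)) := fun t =>
    ENNReal.measurable_ofReal.comp (measurable_const.mul (hmeas t).abs)
  have hsummable : ∀ᵐ ω ∂(ℙ : Measure Ω), Summable (fun t => γ ^ t * |X t ω|) := by
    have hbound : ∫⁻ ω, ∑' t, ENNReal.ofReal (γ ^ t * |X t ω|) ∂(ℙ : Measure Ω) < ⊤ := by
      rw [lintegral_tsum (fun t => (habs_meas t).aemeasurable)]
      have hterm : ∀ t, ∫⁻ ω, ENNReal.ofReal (γ ^ t * |X t ω|) ∂(ℙ : Measure Ω)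
          ≤ ENNReal.ofReal γ ^ t * (ENNReal.ofReal (1/β) * ENNReal.ofReal cβ) := by
        intro t
        have hpt : ∀ ω, ENNReal.ofReal (γ ^ t * |X t ω|)
            ≤ ENNReal.ofReal (γ ^ t * (1/β)) * ENNReal.ofReal (Real.exp (β * |X t ω|)) := by
          intro ω
          rw [← ENNReal.ofReal_mul (by positivity)]
          apply ENNReal.ofReal_le_ofReal
          have h1 : β * |X t ω| ≤ Real.exp (β * |X t ω|) := by
            have := Real.add_one_le_exp (β * |X t ω|)
            linarith
          calc γ ^ t * |X t ω| = γ ^ t * (1/β) * (β * |X t ω|) := by field_simp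
            _ ≤ γ ^ t * (1/β) * Real.exp (β * |X t ω|) := by
                apply mul_le_mul_of_nonneg_left h1 (by positivity)
        calc ∫⁻ ω, ENNReal.ofReal (γ ^ t * |X t ω|) ∂(ℙ : Measure Ω)
            ≤ ∫⁻ ω, ENNReal.ofReal (γ ^ t * (1/β)) *
                ENNReal.ofReal (Real.exp (β * |X t ω|)) ∂(ℙ : Measure Ω) := lintegral_mono hpt
          _ = ENNReal.ofReal (γ ^ t * (1/β)) *
                ∫⁻ ω, ENNReal.ofReal (Real.exp (β * |X t ω|)) ∂(ℙ : Measure Ω) :=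
              lintegral_const_mul _ (hFmeas t)
          _ ≤ ENNReal.ofReal (γ ^ t * (1/β)) * ENNReal.ofReal cβ :=
              mul_le_mul_right (hF_le t) _
          _ = ENNReal.ofReal γ ^ t * (ENNReal.ofReal (1/β) * ENNReal.ofReal cβ) := by
              rw [ENNReal.ofReal_mul (by positivity), ENNReal.ofReal_pow hγ0.le, mul_assoc]
      calc ∑' t, ∫⁻ ω, ENNReal.ofReal (γ ^ t * |X t ω|) ∂(ℙ : Measure Ω)
          ≤ ∑' t, ENNReal.ofReal γ ^ t * (ENNReal.ofReal (1/β) * ENNReal.ofReal cβ) :=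
            ENNReal.tsum_le_tsum hterm
        _ = (∑' t, ENNReal.ofReal γ ^ t) * (ENNReal.ofReal (1/β) * ENNReal.ofReal cβ) :=
            ENNReal.tsum_mul_right
        _ < ⊤ := by
            apply ENNReal.mul_lt_top
            · rw [ENNReal.tsum_geometric]
              simp only [lt_top_iff_ne_top, ne_eq, ENNReal.inv_eq_top]
              rw [tsub_eq_zero_iff_le, not_le]
              exact ENNReal.ofReal_lt_one.mpr hγ1
            · exact ENNReal.mul_lt_top ENNReal.ofReal_lt_top ENNReal.ofReal_lt_top
    have hfin := ae_lt_top (Measurable.ennreal_tsum habs_meas) hbound.ne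
    filter_upwards [hfin] with ω hω
    have hs := ENNReal.summable_toReal hω.ne
    have : (fun t => (ENNReal.ofReal (γ ^ t * |X t ω|)).toReal)
        = fun t => γ ^ t * |X t ω| := by
      funext t
      exact ENNReal.toReal_ofReal (by positivity)
    rwa [this] at hs
  refine ⟨hsummable, ?_⟩
  -- a.e. pointwise bound by the monotone sup of partial products
  have hae : ∀ᵐ ω ∂(ℙ : Measure Ω),
      ENNReal.ofReal (Real.exp (β * |∑' t, γ ^ t * X t ω|))
        ≤ ⨆ n, ∏ t ∈ Finset.range n, g t ω := by
    filter_upwards [hsummable] with ω hs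
    have habs : ∀ t, |γ ^ t * X t ω| = γ ^ t * |X t ω| := fun t => by
      rw [abs_mul, abs_of_pos (hγt t)]
    have hsX : Summable (fun t => γ ^ t * X t ω) := by
      apply Summable.of_norm_bounded hs
      intro t
      exact le_of_eq (by rw [Real.norm_eq_abs, habs t])
    have h1 : |∑' t, γ ^ t * X t ω| ≤ ∑' t, γ ^ t * |X t ω| := by
      calc |∑' t, γ ^ t * X t ω| ≤ ∑' t, ‖γ ^ t * X t ω‖ := by
            rw [← Real.norm_eq_abs]
            apply norm_tsum_le_tsum_norm
            simpa only [Real.norm_eq_abs, habs] using hs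
        _ = ∑' t, γ ^ t * |X t ω| := by
            congr 1; funext t; rw [Real.norm_eq_abs, habs t]
    have h2 : ENNReal.ofReal (Real.exp (β * |∑' t, γ ^ t * X t ω|))
        ≤ ENNReal.ofReal (Real.exp (β * ∑' t, γ ^ t * |X t ω|)) := by
      apply ENNReal.ofReal_le_ofReal
      exact Real.exp_le_exp.mpr (mul_le_mul_of_nonneg_left h1 hβ.le)
    refine h2.trans ?_
    -- partial products
    have hpp : ∀ n, ∏ t ∈ Finset.range n, g t ω
        = ENNReal.ofReal (Real.exp (β * ∑ t ∈ Finset.range n, γ ^ t * |X t ω|)) := by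
      intro n
      rw [Finset.mul_sum, Real.exp_sum, ENNReal.ofReal_prod_of_nonneg
        (fun t _ => (Real.exp_pos _).le)]
    have hmono : Monotone (fun n => ∑ t ∈ Finset.range n, γ ^ t * |X t ω|) := by
      intro m n hmn
      apply Finset.sum_le_sum_of_subset_of_nonneg (Finset.range_subset_range.mpr hmn)
      intro t _ _
      positivity
    have htend : Tendsto (fun n => ENNReal.ofReal
          (Real.exp (β * ∑ t ∈ Finset.range n, γ ^ t * |X t ω|)))
        atTop (nhds (ENNReal.ofReal (Real.exp (β * ∑' t, γ ^ t * |X t ω|)))) := by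
      apply Tendsto.comp (ENNReal.continuous_ofReal.tendsto _)
      apply Tendsto.comp (Real.continuous_exp.tendsto _)
      exact Tendsto.const_mul β hs.hasSum.tendsto_sum_nat
    have hmono2 : Monotone (fun n => ENNReal.ofReal
        (Real.exp (β * ∑ t ∈ Finset.range n, γ ^ t * |X t ω|))) := by
      intro m n hmn
      apply ENNReal.ofReal_le_ofReal
      exact Real.exp_le_exp.mpr (mul_le_mul_of_nonneg_left (hmono hmn) hβ.le)
    have := tendsto_nhds_unique htend (tendsto_atTop_iSup hmono2)
    rw [this]
    simp_rw [hpp]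
    exact le_rfl
  calc ∫⁻ ω, ENNReal.ofReal (Real.exp (β * |∑' t, γ ^ t * X t ω|)) ∂(ℙ : Measure Ω)
      ≤ ∫⁻ ω, ⨆ n, ∏ t ∈ Finset.range n, g t ω ∂(ℙ : Measure Ω) := lintegral_mono_ae hae
    _ = ⨆ n, ∫⁻ ω, ∏ t ∈ Finset.range n, g t ω ∂(ℙ : Measure Ω) := by
        apply lintegral_iSup
        · intro n
          apply Finset.measurable_prod
          exact fun t _ => hgmeas t
        · intro m n hmn ω
          apply Finset.prod_le_prod_of_subset_of_one_le' (Finset.range_subset_range.mpr hmn)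
          intro t _ _
          rw [hg_def]
          simp only [ENNReal.one_le_ofReal]
          exact Real.one_le_exp (by positivity)
    _ ≤ ENNReal.ofReal cβ ^ ((1:ℝ) / (1 - γ)) := by
        apply iSup_le
        intro n
        rw [hprod n]
        exact hprod_le n
    _ = ENNReal.ofReal (cβ ^ ((1:ℝ) / (1 - γ))) := by
        rw [ENNReal.ofReal_rpow_of_pos hc0]
end

section
/- Consider the distributional perpetuity equation G =_d γG + R in ℝ with γ ∈ (0,1), G independent of R, and E[log⁺|R|] < ∞. Then there exists a unique distribution solving this equation, namely the law of ∑_{t=0}^∞ γ^t R_t where (R_t)_{t≥0} are i.i.d. copies of R; moreover, this series converges almost surely. -/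
open MeasureTheory ProbabilityTheory Filter
open scoped NNReal ENNReal Topology

/-- `η` solves the perpetuity equation `G =_d γ G + R`: if `X ~ η` is independent of `R`
(joint law the product measure `η ⊗ law(R)`), then `γ X + R ~ η`. -/
def IsPerpetuitySolution {Ω : Type*} [MeasureSpace Ω] (γ : ℝ) (R : Ω → ℝ)
    (η : Measure ℝ) : Prop :=
  η = Measure.map (fun p : ℝ × ℝ => γ * p.1 + p.2)
        (η.prod ((ℙ : Measure Ω).map R))

/-- A pointwise `tsum` of a sequence of `m`-measurable real functions is `m`-measurable. -/
private lemma aux_measurable_tsum {α : Type*} {m : MeasurableSpace α} {f : ℕ → α → ℝ}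
    (hf : ∀ i, Measurable[m] (f i)) :
    Measurable[m] (fun a => ∑' i, f i a) := by
  classical
  letI := m
  have hP : ∀ S : Finset ℕ, Measurable (fun a => ∑ i ∈ S, f i a) :=
    fun S => Finset.measurable_sum S (fun i _ => hf i)
  have hs : MeasurableSet {a | Summable fun i => f i a} := by
    have h := measurableSet_exists_tendsto (l := (atTop : Filter (Finset ℕ)))
      (f := fun S a => ∑ i ∈ S, f i a) hP
    simpa [Summable, HasSum] using h
  have key : ∀ a, Tendsto (fun n => Set.indicator {a | Summable fun i => f i a}
      (fun a => ∑ i ∈ Finset.range n, f i a) a) atTop (𝓝 (∑' i, f i a)) := by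
    intro a
    by_cases h : Summable fun i => f i a
    · have ha : a ∈ {a | Summable fun i => f i a} := h
      simp only [Set.indicator_of_mem ha]
      exact h.hasSum.tendsto_sum_nat
    · have ha : a ∉ {a | Summable fun i => f i a} := h
      simp only [Set.indicator_of_notMem ha, tsum_eq_zero_of_not_summable h]
      exact tendsto_const_nhds
  exact measurable_of_tendsto_metrizable
    (fun n => Measurable.indicator (hP (Finset.range n)) hs) (tendsto_pi_nhds.2 key)

private lemma aux_lintegral_tendsto {δ : Type*} [MeasurableSpace δ] (ρ : Measure δ)
    [IsProbabilityMeasure ρ] (f : BoundedContinuousFunction ℝ ℝ≥0) (W : ℕ → δ → ℝ) (V : δ → ℝ)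
    (hW : ∀ n, AEMeasurable (W n) ρ)
    (hT : ∀ᵐ a ∂ρ, Tendsto (fun n => W n a) atTop (𝓝 (V a))) :
    Tendsto (fun n => ∫⁻ a, (f (W n a) : ℝ≥0∞) ∂ρ) atTop (𝓝 (∫⁻ a, (f (V a) : ℝ≥0∞) ∂ρ)) := by
  have hfm : Measurable (fun x : ℝ => (f x : ℝ≥0∞)) :=
    measurable_coe_nnreal_ennreal.comp f.continuous.measurable
  refine tendsto_lintegral_of_dominated_convergence' (fun _ => ((nndist f 0 : ℝ≥0) : ℝ≥0∞))
    (fun n => hfm.comp_aemeasurable (hW n))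
    (fun n => Filter.Eventually.of_forall fun a => ?_) ?_ ?_
  · exact ENNReal.coe_le_coe.2 (BoundedContinuousFunction.NNReal.upper_bound f _)
  · rw [lintegral_const, measure_univ, mul_one]
    exact ENNReal.coe_ne_top
  · filter_upwards [hT] with a ha
    exact ENNReal.tendsto_coe.2 ((f.continuous.tendsto _).comp ha)

/-- If `X n → Y` a.e., `X' n → Y'` a.e. and `law (X n) = law (X' n)` for every `n`, then
`law Y = law Y'`. -/
private lemma aux_map_eq {α β : Type*} [MeasurableSpace α] [MeasurableSpace β]
    {μ : Measure α} {ν : Measure β} [IsProbabilityMeasure μ] [IsProbabilityMeasure ν]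
    (X : ℕ → α → ℝ) (Y : α → ℝ) (X' : ℕ → β → ℝ) (Y' : β → ℝ)
    (hX : ∀ n, AEMeasurable (X n) μ) (hY : AEMeasurable Y μ)
    (hX' : ∀ n, AEMeasurable (X' n) ν) (hY' : AEMeasurable Y' ν)
    (hT : ∀ᵐ a ∂μ, Tendsto (fun n => X n a) atTop (𝓝 (Y a)))
    (hT' : ∀ᵐ b ∂ν, Tendsto (fun n => X' n b) atTop (𝓝 (Y' b)))
    (hlaw : ∀ n, μ.map (X n) = ν.map (X' n)) :
    μ.map Y = ν.map Y' := by
  haveI := Measure.isProbabilityMeasure_map hY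
  refine ext_of_forall_lintegral_eq_of_IsFiniteMeasure (fun f => ?_)
  have hfm : Measurable (fun x : ℝ => (f x : ℝ≥0∞)) :=
    measurable_coe_nnreal_ennreal.comp f.continuous.measurable
  have h1 : ∫⁻ x, f x ∂(μ.map Y) = ∫⁻ a, (f (Y a) : ℝ≥0∞) ∂μ :=
    lintegral_map' hfm.aemeasurable hY
  have h2 : ∫⁻ x, f x ∂(ν.map Y') = ∫⁻ b, (f (Y' b) : ℝ≥0∞) ∂ν :=
    lintegral_map' hfm.aemeasurable hY'
  have h3 : ∀ n, ∫⁻ a, (f (X n a) : ℝ≥0∞) ∂μ = ∫⁻ b, (f (X' n b) : ℝ≥0∞) ∂ν := by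
    intro n
    rw [← lintegral_map' hfm.aemeasurable (hX n), ← lintegral_map' hfm.aemeasurable (hX' n),
      hlaw n]
  rw [h1, h2]
  have t1 := aux_lintegral_tendsto μ f X Y hX hT
  have t2 := aux_lintegral_tendsto ν f X' Y' hX' hT'
  simp only [h3] at t1
  exact tendsto_nhds_unique t1 t2

theorem stmt10
    {Ω : Type*} [MeasureSpace Ω] [IsProbabilityMeasure (ℙ : Measure Ω)]
    (γ : ℝ) (hγ0 : 0 < γ) (hγ1 : γ < 1)
    (R : Ω → ℝ) (hmeasR : Measurable R)
    (hlog : Integrable (fun ω => posLog |R ω|) ℙ)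
    (Rseq : ℕ → Ω → ℝ) (hmeas : ∀ t, Measurable (Rseq t))
    (hindep : iIndepFun Rseq ℙ)
    (hident : ∀ t, IdentDistrib (Rseq t) R ℙ ℙ) :
    (∀ᵐ ω ∂(ℙ : Measure Ω), Summable (fun t => γ ^ t * Rseq t ω)) ∧
    (IsProbabilityMeasure ((ℙ : Measure Ω).map (fun ω => ∑' t, γ ^ t * Rseq t ω)) ∧
      IsPerpetuitySolution γ R ((ℙ : Measure Ω).map (fun ω => ∑' t, γ ^ t * Rseq t ω))) ∧
    (∀ η : Measure ℝ, IsProbabilityMeasure η → IsPerpetuitySolution γ R η →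
      η = (ℙ : Measure Ω).map (fun ω => ∑' t, γ ^ t * Rseq t ω)) := by
  classical
  -- ### Part A: almost sure summability
  have hlogγ : Real.log γ < 0 := Real.log_neg hγ0 hγ1
  set c : ℝ := -Real.log γ / 2 with hc
  have hc0 : 0 < c := by
    have : 0 < -Real.log γ := by linarith
    positivity
  have hq0 : 0 ≤ γ * Real.exp c := by positivity
  have hq1 : γ * Real.exp c < 1 := by
    have h1 : Real.exp c < Real.exp (-Real.log γ) := by
      apply Real.exp_lt_exp.2
      rw [hc]; linarith
    have h2 : Real.exp (-Real.log γ) = γ⁻¹ := by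
      rw [Real.exp_neg, Real.exp_log hγ0]
    have h3 := mul_lt_mul_of_pos_left h1 hγ0
    rwa [h2, mul_inv_cancel₀ (ne_of_gt hγ0)] at h3
  have partA : ∀ᵐ ω ∂(ℙ : Measure Ω), Summable fun t => γ ^ t * Rseq t ω := by
    set s : ℕ → Set Ω := fun t => {ω | Real.exp c ^ t < |Rseq t ω|} with hs_def
    have hsum : ∑' t, (ℙ : Measure Ω) (s t) ≠ ∞ := by
      have hle : ∀ t : ℕ, (ℙ : Measure Ω) (s t)
          ≤ ℙ {ω | posLog |R ω| / c ∈ Set.Ioi (t : ℝ)} := by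
        intro t
        have hsm : MeasurableSet {x : ℝ | Real.exp c ^ t < |x|} :=
          measurableSet_lt measurable_const measurable_id.abs
        have hpre : s t = Rseq t ⁻¹' {x | Real.exp c ^ t < |x|} := rfl
        rw [hpre, (hident t).measure_mem_eq hsm]
        apply measure_mono
        intro ω hω
        simp only [Set.mem_preimage, Set.mem_setOf_eq] at hω ⊢
        rw [Set.mem_Ioi]
        have hR0 : (0:ℝ) < |R ω| := lt_of_le_of_lt (by positivity) hω
        have hlg : (t : ℝ) * c < Real.log |R ω| := by
          have h := Real.log_lt_log (by positivity) hω
          rwa [Real.log_pow, Real.log_exp] at h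
        have h4 : (t : ℝ) * c < posLog |R ω| := lt_of_lt_of_le hlg (le_max_left _ _)
        rw [lt_div_iff₀ hc0]
        exact h4
      refine ne_of_lt (lt_of_le_of_lt (ENNReal.tsum_le_tsum hle) ?_)
      refine tsum_prob_mem_Ioi_lt_top (hlog.div_const c) fun ω => ?_
      exact div_nonneg (le_max_right _ _) hc0.le
    filter_upwards [ae_eventually_notMem hsum] with ω hω
    refine Summable.of_norm_bounded_eventually_nat
      (summable_geometric_of_lt_one hq0 hq1) ?_
    filter_upwards [hω] with t ht
    simp only [hs_def, Set.mem_setOf_eq] at ht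
    have hle : |Rseq t ω| ≤ Real.exp c ^ t := not_lt.1 ht
    rw [Real.norm_eq_abs, abs_mul, abs_pow, abs_of_pos hγ0, mul_pow]
    exact mul_le_mul_of_nonneg_left hle (by positivity)
  -- ### setup for parts B, C
  have hgmeas : Measurable (fun p : ℝ × ℝ => γ * p.1 + p.2) :=
    (measurable_fst.const_mul γ).add measurable_snd
  set S : Ω → ℝ := fun ω => ∑' t, γ ^ t * Rseq t ω with hSdef
  have hSmeas : Measurable S :=
    aux_measurable_tsum fun t => (hmeas t).const_mul _
  have hS'meas : Measurable (fun ω => ∑' t, γ ^ t * Rseq (t + 1) ω) :=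
    aux_measurable_tsum fun t => (hmeas _).const_mul _
  -- independence helper on Ω
  have hRind : ∀ (k : ℕ) (F : Ω → ℝ),
      Measurable[⨆ i ∈ {i : ℕ | i ≠ k}, MeasurableSpace.comap (Rseq i) inferInstance] F →
      IndepFun F (Rseq k) ℙ := by
    intro k F hF
    have h := indep_iSup_of_disjoint (fun i => (hmeas i).comap_le) hindep.iIndep
      (S := {i : ℕ | i ≠ k}) (T := {k}) (by simp [Set.disjoint_left])
    exact indep_of_indep_of_le_right
      (indep_of_indep_of_le_left h (measurable_iff_comap_le.1 hF)) (le_biSup (fun i => MeasurableSpace.comap (Rseq i) inferInstance) (Set.mem_singleton k))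
  -- identically distributed shifted partial sums
  have hPid : ∀ n k k', IdentDistrib (fun ω => ∑ t ∈ Finset.range n, γ ^ t * Rseq (t + k) ω)
      (fun ω => ∑ t ∈ Finset.range n, γ ^ t * Rseq (t + k') ω) ℙ ℙ := by
    intro n
    induction n with
    | zero =>
      intro k k'
      simp only [Finset.range_zero, Finset.sum_empty]
      exact IdentDistrib.refl aemeasurable_const
    | succ n ih =>
      intro k k'
      have hdec : ∀ (k : ℕ) (ω : Ω), ∑ t ∈ Finset.range (n+1), γ ^ t * Rseq (t + k) ω
          = γ * (∑ t ∈ Finset.range n, γ ^ t * Rseq (t + (k+1)) ω) + Rseq k ω := by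
        intro k ω
        have h5 : ∀ t, γ ^ (t+1) * Rseq (t + 1 + k) ω = γ * (γ ^ t * Rseq (t + (k+1)) ω) := by
          intro t
          rw [show t + 1 + k = t + (k + 1) from by omega, pow_succ]
          ring
        rw [Finset.sum_range_succ']
        simp only [h5, pow_zero, one_mul, Nat.zero_add, ← Finset.mul_sum]
      have hPm : ∀ k, Measurable (fun ω => ∑ t ∈ Finset.range n, γ ^ t * Rseq (t + (k+1)) ω) :=
        fun k => Finset.measurable_sum _ fun t _ => (hmeas _).const_mul _
      have hind : ∀ k : ℕ,
          IndepFun (fun ω => ∑ t ∈ Finset.range n, γ ^ t * Rseq (t + (k+1)) ω) (Rseq k) ℙ := by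
        intro k
        apply hRind k
        refine Finset.measurable_sum _ fun t _ => Measurable.const_mul ?_ _
        refine measurable_iff_comap_le.2
          (le_biSup (fun i => MeasurableSpace.comap (Rseq i) inferInstance)
            (show t + (k+1) ∈ {i : ℕ | i ≠ k} by simp only [Set.mem_setOf_eq]; omega))
      have hpair : IdentDistrib
          (fun ω => ((∑ t ∈ Finset.range n, γ ^ t * Rseq (t + (k+1)) ω), Rseq k ω))
          (fun ω => ((∑ t ∈ Finset.range n, γ ^ t * Rseq (t + (k'+1)) ω), Rseq k' ω)) ℙ ℙ := by
        refine ⟨((hPm k).prodMk (hmeas k)).aemeasurable,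
          ((hPm k').prodMk (hmeas k')).aemeasurable, ?_⟩
        rw [(indepFun_iff_map_prod_eq_prod_map_map (hPm k).aemeasurable
            (hmeas k).aemeasurable).1 (hind k),
          (indepFun_iff_map_prod_eq_prod_map_map (hPm k').aemeasurable
            (hmeas k').aemeasurable).1 (hind k'),
          (ih (k+1) (k'+1)).map_eq, ((hident k).trans (hident k').symm).map_eq]
      have hcomp := hpair.comp hgmeas
      have e1 : (fun p : ℝ × ℝ => γ * p.1 + p.2) ∘
          (fun ω => ((∑ t ∈ Finset.range n, γ ^ t * Rseq (t + (k+1)) ω), Rseq k ω))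
          = fun ω => ∑ t ∈ Finset.range (n+1), γ ^ t * Rseq (t + k) ω := by
        funext ω
        exact (hdec k ω).symm
      have e2 : (fun p : ℝ × ℝ => γ * p.1 + p.2) ∘
          (fun ω => ((∑ t ∈ Finset.range n, γ ^ t * Rseq (t + (k'+1)) ω), Rseq k' ω))
          = fun ω => ∑ t ∈ Finset.range (n+1), γ ^ t * Rseq (t + k') ω := by
        funext ω
        exact (hdec k' ω).symm
      rw [e1, e2] at hcomp
      exact hcomp
  -- laws of tails agree
  have h3 : (ℙ : Measure Ω).map (fun ω => ∑' t, γ ^ t * Rseq (t + 1) ω)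
      = (ℙ : Measure Ω).map S := by
    refine aux_map_eq (fun n ω => ∑ t ∈ Finset.range n, γ ^ t * Rseq (t + 1) ω)
      (fun ω => ∑' t, γ ^ t * Rseq (t + 1) ω)
      (fun n ω => ∑ t ∈ Finset.range n, γ ^ t * Rseq (t + 0) ω) S
      (fun n => (Finset.measurable_sum _ fun t _ => (hmeas _).const_mul _).aemeasurable)
      hS'meas.aemeasurable
      (fun n => (Finset.measurable_sum _ fun t _ => (hmeas _).const_mul _).aemeasurable)
      hSmeas.aemeasurable ?_ ?_ (fun n => (hPid n 1 0).map_eq)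
    · filter_upwards [partA] with ω hω
      have hshift : Summable (fun t => γ ^ t * Rseq (t + 1) ω) := by
        have h1 := ((summable_nat_add_iff 1).2 hω).mul_left γ⁻¹
        refine h1.congr fun t => ?_
        rw [pow_succ]
        field_simp
      exact hshift.hasSum.tendsto_sum_nat
    · filter_upwards [partA] with ω hω
      exact hω.hasSum.tendsto_sum_nat
  -- a.e. decomposition S = γ S' + R₀
  have haeq : (fun ω => γ * (∑' t, γ ^ t * Rseq (t + 1) ω) + Rseq 0 ω)
      =ᵐ[(ℙ : Measure Ω)] S := by
    filter_upwards [partA] with ω hω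
    have h0 := Summable.tsum_eq_zero_add hω
    have h1 : ∑' t, γ ^ (t+1) * Rseq (t+1) ω = γ * ∑' t, γ ^ t * Rseq (t + 1) ω := by
      rw [← tsum_mul_left]
      congr 1
      funext t
      rw [pow_succ]
      ring
    simp only [pow_zero, one_mul] at h0
    show γ * (∑' t, γ ^ t * Rseq (t + 1) ω) + Rseq 0 ω = ∑' t, γ ^ t * Rseq t ω
    rw [h0, h1]
    ring
  have h2 : IndepFun (fun ω => ∑' t, γ ^ t * Rseq (t + 1) ω) (Rseq 0) ℙ := by
    apply hRind 0
    apply aux_measurable_tsum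
    intro t
    refine Measurable.const_mul ?_ _
    refine measurable_iff_comap_le.2
      (le_biSup (fun i => MeasurableSpace.comap (Rseq i) inferInstance)
        (show t + 1 ∈ {i : ℕ | i ≠ 0} by simp))
  have hsol : IsPerpetuitySolution γ R ((ℙ : Measure Ω).map S) := by
    unfold IsPerpetuitySolution
    have hpairlaw := (indepFun_iff_map_prod_eq_prod_map_map hS'meas.aemeasurable
      (hmeas 0).aemeasurable).1 h2
    calc (ℙ : Measure Ω).map S
        = (ℙ : Measure Ω).map (fun ω => γ * (∑' t, γ ^ t * Rseq (t+1) ω) + Rseq 0 ω) :=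
          (Measure.map_congr haeq).symm
      _ = ((ℙ : Measure Ω).map
            (fun ω => ((∑' t, γ ^ t * Rseq (t+1) ω), Rseq 0 ω))).map
            (fun p : ℝ × ℝ => γ * p.1 + p.2) := by
          have hpm0 : Measurable (fun ω => ((∑' t, γ ^ t * Rseq (t+1) ω), Rseq 0 ω)) :=
            hS'meas.prodMk (hmeas 0)
          rw [Measure.map_map hgmeas hpm0]
          rfl
      _ = Measure.map (fun p : ℝ × ℝ => γ * p.1 + p.2)
            ((((ℙ : Measure Ω)).map S).prod ((ℙ : Measure Ω).map R)) := by
          rw [hpairlaw, h3, (hident 0).map_eq]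
  -- ### Part C: uniqueness
  have huniq : ∀ η : Measure ℝ, IsProbabilityMeasure η → IsPerpetuitySolution γ R η →
      η = (ℙ : Measure Ω).map S := by
    intro η hηp hηsol
    rw [IsPerpetuitySolution] at hηsol
    set ν : Measure ℝ := (ℙ : Measure Ω).map R with hν
    haveI : IsProbabilityMeasure ν := Measure.isProbabilityMeasure_map hmeasR.aemeasurable
    set κ : Measure (ℝ × Ω) := η.prod (ℙ : Measure Ω) with hκ
    haveI : IsProbabilityMeasure κ := by
      rw [hκ]; infer_instance
    set T : Option ℕ → ℝ × Ω → ℝ :=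
      fun i => Option.elim i Prod.fst (fun j p => Rseq j p.2) with hT
    have hTmeas : ∀ i, Measurable (T i) := by
      intro i
      cases i with
      | none => exact measurable_fst
      | some j => exact (hmeas j).comp measurable_snd
    have hκsnd : ∀ (U : Set Ω), MeasurableSet U → κ (Prod.snd ⁻¹' U) = (ℙ : Measure Ω) U := by
      intro U hU
      have hpU : Prod.snd ⁻¹' U = (Set.univ : Set ℝ) ×ˢ U := by
        rw [Set.prod_eq]; simp
      rw [hκ, hpU, Measure.prod_prod, measure_univ, one_mul]
    have hTind : iIndep (fun i => MeasurableSpace.comap (T i) inferInstance) κ := by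
      rw [iIndep_iff]
      intro s fs hfs
      have hch : ∀ i ∈ s, ∃ B : Set ℝ, MeasurableSet B ∧ T i ⁻¹' B = fs i :=
        fun i hi => MeasurableSpace.measurableSet_comap.1 (hfs i hi)
      choose! B hBm hBf using hch
      set t : Finset ℕ := (s.erase none).preimage some ((Option.some_injective ℕ).injOn)
        with htdef
      have hmem : ∀ j ∈ t, some j ∈ s :=
        fun j hj => Finset.mem_of_mem_erase (Finset.mem_preimage.1 hj)
      have hts : s.erase none = t.image some := by
        ext i
        cases i with
        | none => simp [Finset.mem_erase, Finset.mem_image]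
        | some j => simp [htdef, Finset.mem_erase, Finset.mem_image, Finset.mem_preimage]
      have hUfun : ⋂ i ∈ s.erase none, fs i
          = Prod.snd ⁻¹' (⋂ j ∈ t, Rseq j ⁻¹' B (some j)) := by
        rw [hts]
        ext p
        simp only [Set.mem_iInter, Set.mem_preimage, Finset.mem_image]
        constructor
        · intro h j hj
          have h2 := h (some j) ⟨j, hj, rfl⟩
          rw [← hBf (some j) (hmem j hj)] at h2
          exact h2
        · rintro h i ⟨j, hj, rfl⟩
          rw [← hBf (some j) (hmem j hj)]
          exact h j hj
      have hMU : MeasurableSet (⋂ j ∈ t, Rseq j ⁻¹' B (some j)) :=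
        Set.Finite.measurableSet_biInter t.finite_toSet
          fun j hj => (hmeas j) (hBm (some j) (hmem j hj))
      have hμU : (ℙ : Measure Ω) (⋂ j ∈ t, Rseq j ⁻¹' B (some j))
          = ∏ j ∈ t, (ℙ : Measure Ω) (Rseq j ⁻¹' B (some j)) :=
        hindep.meas_biInter fun j hj => ⟨B (some j), hBm (some j) (hmem j hj), rfl⟩
      have hprod : ∏ i ∈ s.erase none, κ (fs i)
          = ∏ j ∈ t, (ℙ : Measure Ω) (Rseq j ⁻¹' B (some j)) := by
        rw [hts, Finset.prod_image (fun a _ b _ h => Option.some_injective ℕ h)]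
        refine Finset.prod_congr rfl fun j hj => ?_
        rw [← hBf (some j) (hmem j hj)]
        have hTj : T (some j) ⁻¹' B (some j) = Prod.snd ⁻¹' (Rseq j ⁻¹' B (some j)) := rfl
        rw [hTj, hκsnd _ ((hmeas j) (hBm (some j) (hmem j hj)))]
      by_cases hnone : none ∈ s
      · have hfnone : fs none = Prod.fst ⁻¹' B none := (hBf none hnone).symm
        rw [← Finset.insert_erase hnone, Finset.set_biInter_insert,
          Finset.prod_insert (Finset.notMem_erase _ _), hUfun, hfnone]
        have hset : Prod.fst ⁻¹' B none ∩ Prod.snd ⁻¹' (⋂ j ∈ t, Rseq j ⁻¹' B (some j))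
            = (B none) ×ˢ (⋂ j ∈ t, Rseq j ⁻¹' B (some j)) := (Set.prod_eq _ _).symm
        rw [hset, hκ, Measure.prod_prod, hμU, hprod]
        congr 1
        have hf2 : Prod.fst ⁻¹' B none = (B none) ×ˢ (Set.univ : Set Ω) := by
          rw [Set.prod_eq]; simp
        rw [hf2, Measure.prod_prod, measure_univ, mul_one]
      · rw [Finset.erase_eq_of_notMem hnone] at hUfun hprod
        rw [hUfun, hκsnd _ hMU, hμU, hprod]
    have hTle : ∀ i, MeasurableSpace.comap (T i) inferInstance
        ≤ (inferInstance : MeasurableSpace (ℝ × Ω)) :=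
      fun i => (hTmeas i).comap_le
    have hκind : ∀ (k : ℕ) (F : ℝ × Ω → ℝ),
        Measurable[⨆ i ∈ {i : Option ℕ | i ≠ some k},
          MeasurableSpace.comap (T i) inferInstance] F →
        IndepFun F (fun p : ℝ × Ω => Rseq k p.2) κ := by
      intro k F hF
      have h := indep_iSup_of_disjoint hTle hTind
        (S := {i : Option ℕ | i ≠ some k}) (T := {some k}) (by simp [Set.disjoint_left])
      exact indep_of_indep_of_le_right
        (indep_of_indep_of_le_left h (measurable_iff_comap_le.1 hF)) (le_biSup (fun i => MeasurableSpace.comap (T i) inferInstance) (Set.mem_singleton (some k)))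
    have hZmeas : ∀ n k, Measurable (fun p : ℝ × Ω =>
        γ ^ n * p.1 + ∑ t ∈ Finset.range n, γ ^ t * Rseq (t + k) p.2) :=
      fun n k => (measurable_fst.const_mul _).add
        (Finset.measurable_sum _ fun t _ => ((hmeas _).comp measurable_snd).const_mul _)
    have hZlaw : ∀ n k, κ.map (fun p : ℝ × Ω =>
        γ ^ n * p.1 + ∑ t ∈ Finset.range n, γ ^ t * Rseq (t + k) p.2) = η := by
      intro n
      induction n with
      | zero =>
        intro k
        have hid : (fun p : ℝ × Ω =>
            γ ^ 0 * p.1 + ∑ t ∈ Finset.range 0, γ ^ t * Rseq (t + k) p.2) = Prod.fst := by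
          funext p; simp
        rw [hid, hκ, Measure.map_fst_prod, measure_univ, one_smul]
      | succ n ih =>
        intro k
        have hdec : ∀ p : ℝ × Ω,
            γ ^ (n+1) * p.1 + ∑ t ∈ Finset.range (n+1), γ ^ t * Rseq (t + k) p.2
            = γ * (γ ^ n * p.1 + ∑ t ∈ Finset.range n, γ ^ t * Rseq (t + (k+1)) p.2)
              + Rseq k p.2 := by
          intro p
          have h5 : ∀ t, γ ^ (t+1) * Rseq (t + 1 + k) p.2
              = γ * (γ ^ t * Rseq (t + (k+1)) p.2) := by
            intro t
            rw [show t + 1 + k = t + (k + 1) from by omega, pow_succ]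
            ring
          rw [Finset.sum_range_succ']
          simp only [h5, pow_zero, one_mul, Nat.zero_add, ← Finset.mul_sum]
          rw [pow_succ]
          ring
        have hZM : Measurable[⨆ i ∈ {i : Option ℕ | i ≠ some k},
            MeasurableSpace.comap (T i) inferInstance]
            (fun p : ℝ × Ω =>
              γ ^ n * p.1 + ∑ t ∈ Finset.range n, γ ^ t * Rseq (t + (k+1)) p.2) := by
          have hfst : Measurable[⨆ i ∈ {i : Option ℕ | i ≠ some k},
              MeasurableSpace.comap (T i) inferInstance] (Prod.fst : ℝ × Ω → ℝ) := by
            refine measurable_iff_comap_le.2 ?_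
            exact le_biSup (fun i => MeasurableSpace.comap (T i) inferInstance)
              (show (none : Option ℕ) ∈ {i : Option ℕ | i ≠ some k} by simp)
          refine Measurable.add (hfst.const_mul _) ?_
          refine Finset.measurable_sum _ fun tt _ => Measurable.const_mul ?_ _
          refine measurable_iff_comap_le.2 ?_
          exact le_biSup (fun i => MeasurableSpace.comap (T i) inferInstance)
            (show some (tt + (k+1)) ∈ {i : Option ℕ | i ≠ some k} by
              simp only [Set.mem_setOf_eq, ne_eq, Option.some.injEq]; omega)
        have hind := hκind k _ hZM
        have hRk : κ.map (fun p : ℝ × Ω => Rseq k p.2) = ν := by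
          have hc2 : (fun p : ℝ × Ω => Rseq k p.2) = (Rseq k) ∘ Prod.snd := rfl
          rw [hc2, ← Measure.map_map (hmeas k) measurable_snd, hκ, Measure.map_snd_prod,
            measure_univ, one_smul, (hident k).map_eq]
        have hsndk : Measurable (fun p : ℝ × Ω => Rseq k p.2) :=
          (hmeas k).comp measurable_snd
        have hpairlaw := (indepFun_iff_map_prod_eq_prod_map_map (hZmeas n (k+1)).aemeasurable
          hsndk.aemeasurable).1 hind
        have hcomp : (fun p : ℝ × Ω =>
            γ ^ (n+1) * p.1 + ∑ t ∈ Finset.range (n+1), γ ^ t * Rseq (t + k) p.2)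
            = (fun q : ℝ × ℝ => γ * q.1 + q.2) ∘ (fun p : ℝ × Ω =>
              ((γ ^ n * p.1 + ∑ t ∈ Finset.range n, γ ^ t * Rseq (t + (k+1)) p.2),
                Rseq k p.2)) := by
          funext p
          exact hdec p
        have hpm : Measurable (fun p : ℝ × Ω =>
            ((γ ^ n * p.1 + ∑ t ∈ Finset.range n, γ ^ t * Rseq (t + (k+1)) p.2),
              Rseq k p.2)) := (hZmeas n (k+1)).prodMk hsndk
        rw [hcomp, ← Measure.map_map hgmeas hpm, hpairlaw, ih (k+1), hRk]
        exact hηsol.symm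
    -- pass to the limit
    have hmapsnd : κ.map Prod.snd = (ℙ : Measure Ω) := by
      rw [hκ, Measure.map_snd_prod, measure_univ, one_smul]
    have hsumκ : ∀ᵐ p ∂κ, Summable fun t => γ ^ t * Rseq t p.2 := by
      exact ae_of_ae_map measurable_snd.aemeasurable (hmapsnd.symm ▸ partA)
    have htend : ∀ᵐ p ∂κ, Tendsto (fun n =>
        γ ^ n * p.1 + ∑ t ∈ Finset.range n, γ ^ t * Rseq (t + 0) p.2) atTop (𝓝 (S p.2)) := by
      filter_upwards [hsumκ] with p hp
      have h1 : Tendsto (fun n => γ ^ n * p.1) atTop (𝓝 0) := by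
        have h6 := (tendsto_pow_atTop_nhds_zero_of_lt_one hγ0.le hγ1).mul_const p.1
        simpa using h6
      have h2 : Tendsto (fun n => ∑ t ∈ Finset.range n, γ ^ t * Rseq (t + 0) p.2)
          atTop (𝓝 (S p.2)) := hp.hasSum.tendsto_sum_nat
      simpa using h1.add h2
    have hfinal := aux_map_eq (μ := κ) (ν := η)
      (fun n p => γ ^ n * p.1 + ∑ t ∈ Finset.range n, γ ^ t * Rseq (t + 0) p.2)
      (fun p => S p.2) (fun _ => (id : ℝ → ℝ)) (id : ℝ → ℝ)
      (fun n => (hZmeas n 0).aemeasurable) ((hSmeas.comp measurable_snd).aemeasurable)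
      (fun _ => aemeasurable_id) aemeasurable_id htend
      (Filter.Eventually.of_forall fun x => tendsto_const_nhds)
      (fun n => by rw [Measure.map_id]; exact hZlaw n 0)
    rw [Measure.map_id] at hfinal
    rw [← hfinal]
    have hc3 : (fun p : ℝ × Ω => S p.2) = S ∘ Prod.snd := rfl
    rw [hc3, ← Measure.map_map hSmeas measurable_snd, hmapsnd]
  exact ⟨partA, ⟨Measure.isProbabilityMeasure_map hSmeas.aemeasurable, hsol⟩, huniq⟩
end

section
/- Let d ≥ 1, γ ∈ (0,1), and let (R_1,J_1),...,(R_d,J_d) be random pairs with R_i real-valued and J_i taking values in {1,...,d}. Suppose the distributional Bellman operator T on P(ℝ)^d, defined componentwise by T_i(η_1,...,η_d) = law(R_i + γ G_{J_i}) with G_j ~ η_j and G_1,...,G_d,(R_i,J_i) independent, has a fixed point. Then the fixed point is unique. -/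
open MeasureTheory ProbabilityTheory Filter Metric Set
open scoped ENNReal Topology

/-- The distributional Bellman operator on `(Fin d → Measure ℝ)`:
`T_i(η) = law(R_i + γ G_{J_i})` where `G_j ~ η_j` and `G_1,…,G_d,(R_i,J_i)` are independent.
Since only `G_{J_i}` appears, this law can be written as the bind of the law of `(R_i, J_i)`
against `(r, j) ↦ (g ↦ r + γ g)_* η_j`. -/
noncomputable def bellmanOp {Ω : Type*} [MeasureSpace Ω] {d : ℕ}
    (γ : ℝ) (R : Fin d → Ω → ℝ) (J : Fin d → Ω → Fin d)
    (η : Fin d → Measure ℝ) : Fin d → Measure ℝ :=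
  fun i => Measure.bind ((ℙ : Measure Ω).map (fun ω => (R i ω, J i ω)))
    (fun p : ℝ × Fin d => Measure.map (fun g => p.1 + γ * g) (η p.2))

/-- Measurability of the kernel appearing in `bellmanOp`. -/
lemma kernel_measurable {d : ℕ} (γ : ℝ) (η : Fin d → Measure ℝ)
    (hη : ∀ i, IsProbabilityMeasure (η i)) :
    Measurable (fun p : ℝ × Fin d => Measure.map (fun g => p.1 + γ * g) (η p.2)) := by
  apply Measure.measurable_of_measurable_coe
  intro s hs
  have hmap : ∀ (p : ℝ × Fin d),
      Measure.map (fun g => p.1 + γ * g) (η p.2) s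
        = ∫⁻ g, s.indicator (1 : ℝ → ℝ≥0∞) (p.1 + γ * g) ∂(η p.2) := by
    intro p
    rw [Measure.map_apply (by fun_prop) hs,
      ← lintegral_indicator_one (hs.preimage (by fun_prop : Measurable fun g => p.1 + γ * g))]
    exact lintegral_congr fun g => rfl
  simp_rw [hmap]
  apply measurable_from_prod_countable_left
  intro j
  show Measurable fun x : ℝ => ∫⁻ g, s.indicator 1 (x + γ * g) ∂(η j)
  exact Measurable.lintegral_prod_right'
    (f := fun q : ℝ × ℝ => s.indicator 1 (q.1 + γ * q.2))
    (((measurable_const.indicator hs).comp (by fun_prop)))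

lemma bellman_apply {Ω : Type*} [MeasureSpace Ω] [IsProbabilityMeasure (ℙ : Measure Ω)]
    {d : ℕ} (γ : ℝ)
    (R : Fin d → Ω → ℝ) (J : Fin d → Ω → Fin d)
    (η : Fin d → Measure ℝ) (hη : ∀ i, IsProbabilityMeasure (η i))
    (i : Fin d) {A : Set ℝ} (hA : MeasurableSet A) :
    bellmanOp γ R J η i A
      = ∫⁻ p : ℝ × Fin d, η p.2 ((fun g => p.1 + γ * g) ⁻¹' A)
          ∂((ℙ : Measure Ω).map (fun ω => (R i ω, J i ω))) := by
  rw [bellmanOp, Measure.bind_apply hA (kernel_measurable γ η hη).aemeasurable]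
  exact lintegral_congr fun p => Measure.map_apply (by fun_prop) hA

/-- One contraction step for the Lévy–Prokhorov-type comparison. -/
lemma bellman_step {Ω : Type*} [MeasureSpace Ω] [IsProbabilityMeasure (ℙ : Measure Ω)]
    {d : ℕ} (γ : ℝ) (hγ0 : 0 < γ)
    (R : Fin d → Ω → ℝ) (J : Fin d → Ω → Fin d)
    (hmeasR : ∀ i, Measurable (R i)) (hmeasJ : ∀ i, Measurable (J i))
    (η ν : Fin d → Measure ℝ)
    (hη : ∀ i, IsProbabilityMeasure (η i)) (hν : ∀ i, IsProbabilityMeasure (ν i))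
    (hfixη : bellmanOp γ R J η = η) (hfixν : bellmanOp γ R J ν = ν)
    (δ : ℝ) (ε : ℝ≥0∞)
    (h : ∀ i A, MeasurableSet A → η i A ≤ ν i (thickening δ A) + ε) :
    ∀ i A, MeasurableSet A → η i A ≤ ν i (thickening (γ * δ) A) + ε := by
  intro i A hA
  set μ : Measure (ℝ × Fin d) := (ℙ : Measure Ω).map (fun ω => (R i ω, J i ω)) with hμ
  have hμprob : IsProbabilityMeasure μ :=
    Measure.isProbabilityMeasure_map (by fun_prop : Measurable fun ω => (R i ω, J i ω)).aemeasurable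
  have key : ∀ p : ℝ × Fin d,
      η p.2 ((fun g => p.1 + γ * g) ⁻¹' A)
        ≤ ν p.2 ((fun g => p.1 + γ * g) ⁻¹' (thickening (γ * δ) A)) + ε := by
    intro p
    refine le_trans (h p.2 _ (hA.preimage (by fun_prop))) ?_
    refine add_le_add_left (measure_mono ?_) ε
    intro g hg
    rw [mem_thickening_iff] at hg
    obtain ⟨z, hz, hdz⟩ := hg
    rw [mem_preimage, mem_thickening_iff]
    refine ⟨p.1 + γ * z, hz, ?_⟩
    have : dist (p.1 + γ * g) (p.1 + γ * z) = γ * dist g z := by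
      rw [Real.dist_eq, Real.dist_eq]
      rw [show p.1 + γ * g - (p.1 + γ * z) = γ * (g - z) by ring, abs_mul,
        abs_of_pos hγ0]
    rw [this]
    exact mul_lt_mul_of_pos_left hdz hγ0
  have hηA : η i A = ∫⁻ p : ℝ × Fin d, η p.2 ((fun g => p.1 + γ * g) ⁻¹' A) ∂μ := by
    conv_lhs => rw [← hfixη]
    exact bellman_apply γ R J η hη i hA
  have hνA : ν i (thickening (γ * δ) A)
      = ∫⁻ p : ℝ × Fin d, ν p.2 ((fun g => p.1 + γ * g) ⁻¹' (thickening (γ * δ) A)) ∂μ := by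
    conv_lhs => rw [← hfixν]
    exact bellman_apply γ R J ν hν i isOpen_thickening.measurableSet
  rw [hηA, hνA]
  calc ∫⁻ p : ℝ × Fin d, η p.2 ((fun g => p.1 + γ * g) ⁻¹' A) ∂μ
      ≤ ∫⁻ p : ℝ × Fin d,
          (ν p.2 ((fun g => p.1 + γ * g) ⁻¹' (thickening (γ * δ) A)) + ε) ∂μ :=
        lintegral_mono key
    _ = (∫⁻ p : ℝ × Fin d,
          ν p.2 ((fun g => p.1 + γ * g) ⁻¹' (thickening (γ * δ) A)) ∂μ) + ε := by
        rw [lintegral_add_right _ measurable_const, lintegral_const, measure_univ, mul_one]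

/-- Initial comparison: any two probability measures are comparable up to a large thickening. -/
lemma bellman_base {d : ℕ} (η ν : Fin d → Measure ℝ)
    (hη : ∀ i, IsProbabilityMeasure (η i)) (hν : ∀ i, IsProbabilityMeasure (ν i))
    (ε : ℝ≥0∞) (hε : 0 < ε) :
    ∃ δ > (0:ℝ), ∀ i A, MeasurableSet A → η i A ≤ ν i (thickening δ A) + ε := by
  have tight : ∀ (μ : Measure ℝ), IsProbabilityMeasure μ →
      ∀ᶠ (n : ℕ) in atTop, μ (closedBall (0:ℝ) n)ᶜ < ε := by
    intro μ hμ
    have h1 : Tendsto (fun n : ℕ => μ (closedBall (0:ℝ) n)ᶜ) atTop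
        (𝓝 (μ (⋂ n : ℕ, (closedBall (0:ℝ) n)ᶜ))) := by
      refine tendsto_measure_iInter_atTop
        (fun n => measurableSet_closedBall.compl.nullMeasurableSet) ?_ ⟨0, measure_ne_top μ _⟩
      intro m n hmn
      exact compl_subset_compl.2 (closedBall_subset_closedBall (by exact_mod_cast hmn))
    have h2 : (⋂ n : ℕ, (closedBall (0:ℝ) n)ᶜ) = ∅ := by
      ext x
      simp only [mem_iInter, mem_compl_iff, mem_closedBall, Real.dist_eq, sub_zero,
        mem_empty_iff_false, iff_false, not_forall, not_not]
      obtain ⟨n, hn⟩ := exists_nat_ge |x|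
      exact ⟨n, hn⟩
    rw [h2, measure_empty] at h1
    exact h1.eventually_lt_const hε
  have hev : ∀ᶠ (n : ℕ) in atTop,
      ∀ i, η i (closedBall (0:ℝ) n)ᶜ < ε ∧ ν i (closedBall (0:ℝ) n)ᶜ < ε :=
    eventually_all.2 fun i => (tight (η i) (hη i)).and (tight (ν i) (hν i))
  obtain ⟨M, hM⟩ := hev.exists
  refine ⟨2 * (M:ℝ) + 1, by positivity, ?_⟩
  intro i A hA
  by_cases hne : (A ∩ closedBall (0:ℝ) M).Nonempty
  · obtain ⟨a, haA, haM⟩ := hne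
    have hsub : closedBall (0:ℝ) M ⊆ thickening (2 * (M:ℝ) + 1) A := by
      intro x hx
      rw [mem_thickening_iff]
      refine ⟨a, haA, ?_⟩
      have h1 : dist x a ≤ dist x 0 + dist 0 a := dist_triangle x 0 a
      have h2 : dist x (0:ℝ) ≤ M := mem_closedBall.1 hx
      have h3 : dist (0:ℝ) a ≤ M := by rw [dist_comm]; exact mem_closedBall.1 haM
      linarith
    calc η i A ≤ 1 := prob_le_one
      _ = ν i univ := measure_univ.symm
      _ = ν i (closedBall (0:ℝ) M) + ν i (closedBall (0:ℝ) M)ᶜ :=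
          (measure_add_measure_compl measurableSet_closedBall).symm
      _ ≤ ν i (thickening (2 * (M:ℝ) + 1) A) + ε :=
          add_le_add (measure_mono hsub) (hM i).2.le
  · have hsub : A ⊆ (closedBall (0:ℝ) M)ᶜ := by
      intro x hx
      by_contra hc
      exact hne ⟨x, hx, not_not.1 hc⟩
    calc η i A ≤ η i (closedBall (0:ℝ) M)ᶜ := measure_mono hsub
      _ ≤ ε := (hM i).1.le
      _ ≤ ν i (thickening (2 * (M:ℝ) + 1) A) + ε := le_add_self

/-- One-sided comparison on closed sets. -/
lemma bellman_le_on_closed {Ω : Type*} [MeasureSpace Ω] [IsProbabilityMeasure (ℙ : Measure Ω)]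
    {d : ℕ} (γ : ℝ) (hγ0 : 0 < γ) (hγ1 : γ < 1)
    (R : Fin d → Ω → ℝ) (J : Fin d → Ω → Fin d)
    (hmeasR : ∀ i, Measurable (R i)) (hmeasJ : ∀ i, Measurable (J i))
    (η ν : Fin d → Measure ℝ)
    (hη : ∀ i, IsProbabilityMeasure (η i)) (hν : ∀ i, IsProbabilityMeasure (ν i))
    (hfixη : bellmanOp γ R J η = η) (hfixν : bellmanOp γ R J ν = ν) :
    ∀ i (F : Set ℝ), IsClosed F → η i F ≤ ν i F := by
  intro i F hF
  refine ENNReal.le_of_forall_pos_le_add fun ε hε _ => ?_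
  obtain ⟨δ, hδ, hbase⟩ := bellman_base η ν hη hν (ε : ℝ≥0∞) (by exact_mod_cast hε)
  have hiter : ∀ n : ℕ, ∀ i A, MeasurableSet A →
      η i A ≤ ν i (thickening (γ ^ n * δ) A) + (ε : ℝ≥0∞) := by
    intro n
    induction n with
    | zero => simpa using hbase
    | succ n ih =>
      have := bellman_step γ hγ0 R J hmeasR hmeasJ η ν hη hν hfixη hfixν
        (γ ^ n * δ) (ε : ℝ≥0∞) ih
      intro i A hA
      have hcast : γ * (γ ^ n * δ) = γ ^ (n + 1) * δ := by ring
      rw [← hcast]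
      exact this i A hA
  have h0 : Tendsto (fun n : ℕ => γ ^ n * δ) atTop (𝓝[>] 0) := by
    apply tendsto_nhdsWithin_of_tendsto_nhds_of_eventually_within
    · simpa using (tendsto_pow_atTop_nhds_zero_of_lt_one hγ0.le hγ1).mul_const δ
    · exact Eventually.of_forall fun n => mul_pos (pow_pos hγ0 n) hδ
  have htend : Tendsto (fun n : ℕ => ν i (thickening (γ ^ n * δ) F) + (ε : ℝ≥0∞)) atTop
      (𝓝 (ν i F + ε)) := by
    exact ((tendsto_measure_thickening_of_isClosed
      ⟨1, one_pos, measure_ne_top _ _⟩ hF).comp h0).add tendsto_const_nhds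
  exact ge_of_tendsto htend
    (Eventually.of_forall fun n => hiter n i F hF.measurableSet)

theorem stmt11
    {Ω : Type*} [MeasureSpace Ω] [IsProbabilityMeasure (ℙ : Measure Ω)]
    {d : ℕ} (hd : 1 ≤ d)
    (γ : ℝ) (hγ0 : 0 < γ) (hγ1 : γ < 1)
    (R : Fin d → Ω → ℝ) (J : Fin d → Ω → Fin d)
    (hmeasR : ∀ i, Measurable (R i)) (hmeasJ : ∀ i, Measurable (J i))
    (η ν : Fin d → Measure ℝ)
    (hη : ∀ i, IsProbabilityMeasure (η i)) (hν : ∀ i, IsProbabilityMeasure (ν i))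
    (hfixη : bellmanOp γ R J η = η) (hfixν : bellmanOp γ R J ν = ν) :
    η = ν := by
  have h1 := bellman_le_on_closed γ hγ0 hγ1 R J hmeasR hmeasJ η ν hη hν hfixη hfixν
  have h2 := bellman_le_on_closed γ hγ0 hγ1 R J hmeasR hmeasJ ν η hν hη hfixν hfixη
  funext i
  have := hη i; have := hν i
  refine MeasureTheory.ext_of_generate_finite {s : Set ℝ | IsClosed s}
    (BorelSpace.measurable_eq.trans borel_eq_generateFrom_isClosed) ?_ ?_ ?_
  · exact fun s hs t ht _ => hs.inter ht
  · exact fun s hs => le_antisymm (h1 i s hs) (h2 i s hs)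
  · simp
end

section
/- Let γ ∈ (0,1), let (I_t)_{t≥0} be a Markov chain on a finite state space [d], let (R_{ijt}) be an independent array of independent real-valued random variables with (R_{ijt})_t i.i.d. for each (i,j), independent of (I_t). If E[log⁺|R_{ijt}|] < ∞ for every pair (i,j) such that i is essential and p_{ij} > 0, then the infinite series ∑_{t=0}^∞ γ^t R_{I_t,I_{t+1},t} converges absolutely almost surely. -/
open MeasureTheory ProbabilityTheory Filter

/-- `(I_t)` is a homogeneous Markov chain with initial distribution `init` and
transition matrix `P`: finite-dimensional path probabilities factorize. -/
def IsMarkovChain {Ω : Type*} [MeasureSpace Ω] {d : ℕ}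
    (I : ℕ → Ω → Fin d) (init : Fin d → ENNReal) (P : Matrix (Fin d) (Fin d) ℝ) : Prop :=
  ∀ n : ℕ, ∀ path : ℕ → Fin d,
    ℙ {ω | ∀ k ≤ n, I k ω = path k}
      = init (path 0) * ∏ k ∈ Finset.range n, ENNReal.ofReal (P (path k) (path (k + 1)))

/-- `i → j`: state `j` is reachable from `i` (via the transition matrix). -/
def Reaches {d : ℕ} (P : Matrix (Fin d) (Fin d) ℝ) (i j : Fin d) : Prop :=
  ∃ t : ℕ, 0 < (P ^ t) i j

/-- A state is essential if every state reachable from it leads back to it. -/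
def Essential {d : ℕ} (P : Matrix (Fin d) (Fin d) ℝ) (i : Fin d) : Prop :=
  ∀ j, Reaches P i j → Reaches P j i

section auxAll
variable {d : ℕ} {P Q : Matrix (Fin d) (Fin d) ℝ}

variable {d : ℕ} {P : Matrix (Fin d) (Fin d) ℝ}

lemma pow_entry_nonneg (hPnn : ∀ i j, 0 ≤ P i j) (t : ℕ) (i j : Fin d) :
    0 ≤ (P ^ t) i j := by
  induction t generalizing i j with
  | zero => simp [Matrix.one_apply]; split <;> norm_num
  | succ n ih =>
      rw [pow_succ, Matrix.mul_apply]
      exact Finset.sum_nonneg fun k _ => mul_nonneg (ih i k) (hPnn k j)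

lemma pow_row_sum (hProw : ∀ i, ∑ j, P i j = 1) (t : ℕ) (i : Fin d) :
    ∑ j, (P ^ t) i j = 1 := by
  induction t generalizing i with
  | zero => simp [Matrix.one_apply]
  | succ n ih =>
      rw [pow_succ]
      simp only [Matrix.mul_apply]
      rw [Finset.sum_comm]
      simp_rw [← Finset.mul_sum, hProw, mul_one, ih]

lemma reaches_refl (i : Fin d) : Reaches P i i :=
  ⟨0, by simp [Matrix.one_apply]⟩

lemma reaches_trans (hPnn : ∀ i j, 0 ≤ P i j) {i j k : Fin d}
    (h1 : Reaches P i j) (h2 : Reaches P j k) : Reaches P i k := by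
  obtain ⟨s, hs⟩ := h1
  obtain ⟨t, ht⟩ := h2
  refine ⟨s + t, ?_⟩
  rw [pow_add, Matrix.mul_apply]
  have : 0 < (P ^ s) i j * (P ^ t) j k := mul_pos hs ht
  calc (0:ℝ) < (P ^ s) i j * (P ^ t) j k := this
    _ ≤ ∑ l, (P ^ s) i l * (P ^ t) l k := by
        refine Finset.single_le_sum (fun l _ => mul_nonneg (pow_entry_nonneg hPnn s i l)
          (pow_entry_nonneg hPnn t l k)) (Finset.mem_univ j)

lemma reaches_of_pos {i j : Fin d} (h : 0 < P i j) : Reaches P i j :=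
  ⟨1, by simpa using h⟩

lemma essential_closed (hPnn : ∀ i j, 0 ≤ P i j) {i j : Fin d}
    (hi : Essential P i) (hij : 0 < P i j) : Essential P j := by
  intro k hjk
  have hik : Reaches P i k := reaches_trans hPnn (reaches_of_pos hij) hjk
  exact reaches_trans hPnn (hi k hik) (reaches_of_pos hij)

open Classical in
lemma exists_essential_reachable (hPnn : ∀ i j, 0 ≤ P i j) (i : Fin d) :
    ∃ e, Reaches P i e ∧ Essential P e := by
  classical
  set S : Fin d → Finset (Fin d) := fun j => Finset.univ.filter (Reaches P j) with hS
  have hmem : ∀ j k, k ∈ S j ↔ Reaches P j k := by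
    intro j k; simp [hS]
  obtain ⟨e, he, hemin⟩ := Finset.exists_min_image (Finset.univ.filter (Reaches P i))
    (fun j => (S j).card) ⟨i, by simp [reaches_refl]⟩
  rw [Finset.mem_filter] at he
  refine ⟨e, he.2, ?_⟩
  intro k hek
  by_contra hke
  have hik : Reaches P i k := reaches_trans hPnn he.2 hek
  have hsub : S k ⊆ S e := by
    intro l hl
    rw [hmem] at hl ⊢
    exact reaches_trans hPnn hek hl
  have hne : e ∈ S e := (hmem e e).2 (reaches_refl e)
  have hnek : e ∉ S k := fun h => hke ((hmem k e).1 h)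
  have : (S k).card < (S e).card :=
    Finset.card_lt_card (Finset.ssubset_iff_of_subset hsub |>.2 ⟨e, hne, hnek⟩)
  have := hemin k (by simp [hik])
  omega


open Classical in
lemma ess_row_sum (hPnn : ∀ i j, 0 ≤ P i j) (hProw : ∀ i, ∑ j, P i j = 1)
    {k : Fin d} (hk : Essential P k) :
    ∑ j ∈ Finset.univ.filter (Essential P), P k j = 1 := by
  classical
  rw [← hProw k]
  refine Finset.sum_subset (Finset.subset_univ _) ?_
  intro j _ hj
  rw [Finset.mem_filter] at hj
  push_neg at hj
  by_contra h
  exact (hj (Finset.mem_univ j)) (essential_closed hPnn hk (lt_of_le_of_ne (hPnn k j) (Ne.symm h)))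

open Classical in
lemma ess_mass_mono (hPnn : ∀ i j, 0 ≤ P i j) (hProw : ∀ i, ∑ j, P i j = 1)
    (t : ℕ) (i : Fin d) :
    ∑ j ∈ Finset.univ.filter (Essential P), (P ^ t) i j
      ≤ ∑ j ∈ Finset.univ.filter (Essential P), (P ^ (t+1)) i j := by
  classical
  set E := Finset.univ.filter (Essential P) with hE
  have step : ∑ j ∈ E, (P ^ (t+1)) i j = ∑ k, (P ^ t) i k * ∑ j ∈ E, P k j := by
    simp only [pow_succ, Matrix.mul_apply]
    rw [Finset.sum_comm]
    simp_rw [Finset.mul_sum]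
  rw [step]
  calc ∑ j ∈ E, (P ^ t) i j
      = ∑ j ∈ E, (P ^ t) i j * ∑ l ∈ E, P j l := by
        refine Finset.sum_congr rfl fun j hj => ?_
        rw [hE, Finset.mem_filter] at hj
        rw [ess_row_sum hPnn hProw hj.2, mul_one]
    _ ≤ ∑ k, (P ^ t) i k * ∑ j ∈ E, P k j := by
        refine Finset.sum_le_sum_of_subset_of_nonneg (Finset.subset_univ _) ?_
        intro k _ _
        exact mul_nonneg (pow_entry_nonneg hPnn t i k)
          (Finset.sum_nonneg fun j _ => hPnn k j)

open Classical in
lemma ess_mass_mono' (hPnn : ∀ i j, 0 ≤ P i j) (hProw : ∀ i, ∑ j, P i j = 1)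
    {s t : ℕ} (hst : s ≤ t) (i : Fin d) :
    ∑ j ∈ Finset.univ.filter (Essential P), (P ^ s) i j
      ≤ ∑ j ∈ Finset.univ.filter (Essential P), (P ^ t) i j := by
  induction t with
  | zero => simp_all
  | succ n ih =>
      rcases Nat.lt_or_ge s (n+1) with h | h
      · exact le_trans (ih (by omega)) (ess_mass_mono hPnn hProw n i)
      · have : s = n + 1 := by omega
        subst this; exact le_rfl

open Classical in
lemma exists_unif_escape (hd : 1 ≤ d) (hPnn : ∀ i j, 0 ≤ P i j)
    (hProw : ∀ i, ∑ j, P i j = 1) :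
    ∃ m : ℕ, 1 ≤ m ∧ ∃ δ : ℝ, 0 < δ ∧ δ ≤ 1 ∧
      ∀ i, δ ≤ ∑ j ∈ Finset.univ.filter (Essential P), (P ^ m) i j := by
  classical
  have : Nonempty (Fin d) := ⟨⟨0, hd⟩⟩
  have hne : (Finset.univ : Finset (Fin d)).Nonempty := Finset.univ_nonempty
  -- for each i choose a time sᵢ
  have hex : ∀ i : Fin d, ∃ s : ℕ,
      0 < ∑ j ∈ Finset.univ.filter (Essential P), (P ^ s) i j := by
    intro i
    obtain ⟨e, ⟨s, hs⟩, hess⟩ := exists_essential_reachable hPnn i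
    refine ⟨s, ?_⟩
    refine Finset.sum_pos' (fun j _ => pow_entry_nonneg hPnn s i j) ⟨e, ?_, hs⟩
    simp [hess]
  choose s hs using hex
  set m : ℕ := 1 + Finset.univ.sup s with hm
  have hmle : ∀ i, s i ≤ m := fun i => le_trans (Finset.le_sup (Finset.mem_univ i)) (by omega)
  have hpos : ∀ i, 0 < ∑ j ∈ Finset.univ.filter (Essential P), (P ^ m) i j :=
    fun i => lt_of_lt_of_le (hs i) (ess_mass_mono' hPnn hProw (hmle i) i)
  obtain ⟨i0, _, hmin⟩ := Finset.exists_min_image Finset.univ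
    (fun i => ∑ j ∈ Finset.univ.filter (Essential P), (P ^ m) i j) hne
  refine ⟨m, by omega, _, hpos i0, ?_, fun i => hmin i (Finset.mem_univ i)⟩
  calc ∑ j ∈ Finset.univ.filter (Essential P), (P ^ m) i0 j
      ≤ ∑ j, (P ^ m) i0 j := Finset.sum_le_sum_of_subset_of_nonneg (Finset.subset_univ _)
        (fun j _ _ => pow_entry_nonneg hPnn m i0 j)
    _ = 1 := pow_row_sum hProw m i0


section sub
variable {Q P : Matrix (Fin d) (Fin d) ℝ}

lemma sub_pow_le (hPnn : ∀ i j, 0 ≤ P i j) (hQnn : ∀ i j, 0 ≤ Q i j)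
    (hQle : ∀ i j, Q i j ≤ P i j) (t : ℕ) (i j : Fin d) :
    (Q ^ t) i j ≤ (P ^ t) i j := by
  induction t generalizing i j with
  | zero => simp
  | succ n ih =>
      simp only [pow_succ, Matrix.mul_apply]
      refine Finset.sum_le_sum fun k _ => ?_
      exact mul_le_mul (ih i k) (hQle k j) (hQnn k j) (pow_entry_nonneg hPnn n i k)

lemma sub_decay (hQnn : ∀ i j, 0 ≤ Q i j)
    {m : ℕ} {C : ℝ} (hC0 : 0 ≤ C) (hC1 : C ≤ 1)
    (hrow1 : ∀ t i, ∑ j, (Q ^ t) i j ≤ 1)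
    (hQm : ∀ i, ∑ j, (Q ^ m) i j ≤ C)
    (t : ℕ) (i : Fin d) : ∑ j, (Q ^ t) i j ≤ C ^ (t / m) := by
  have hsplit : ∀ a b i, ∑ j, (Q ^ (a + b)) i j
      = ∑ k, (Q ^ a) i k * ∑ j, (Q ^ b) k j := by
    intro a b i
    simp only [pow_add, Matrix.mul_apply]
    rw [Finset.sum_comm]
    simp_rw [Finset.mul_sum]
  have hq : ∀ q i, ∑ j, (Q ^ (m * q)) i j ≤ C ^ q := by
    intro q
    induction q with
    | zero => intro i; simpa using hrow1 0 i
    | succ n ih =>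
        intro i
        have : m * (n + 1) = m * n + m := by ring
        rw [this, pow_succ]
        calc ∑ j, (Q ^ (m * n + m)) i j
            = ∑ k, (Q ^ (m * n)) i k * ∑ j, (Q ^ m) k j := hsplit _ _ i
          _ ≤ ∑ k, (Q ^ (m * n)) i k * C := by
              refine Finset.sum_le_sum fun k _ => ?_
              exact mul_le_mul_of_nonneg_left (hQm k) (pow_entry_nonneg hQnn _ i k)
          _ = (∑ k, (Q ^ (m * n)) i k) * C := by rw [← Finset.sum_mul]
          _ ≤ C ^ n * C := mul_le_mul_of_nonneg_right (ih i) hC0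
  rcases Nat.eq_zero_or_pos m with hm | hm
  · subst hm; simpa using hrow1 t i
  calc ∑ j, (Q ^ t) i j
      = ∑ j, (Q ^ (m * (t / m) + t % m)) i j := by rw [Nat.div_add_mod]
    _ = ∑ k, (Q ^ (m * (t / m))) i k * ∑ j, (Q ^ (t % m)) k j := hsplit _ _ i
    _ ≤ ∑ k, (Q ^ (m * (t / m))) i k * 1 := by
        refine Finset.sum_le_sum fun k _ => ?_
        exact mul_le_mul_of_nonneg_left (hrow1 _ k) (pow_entry_nonneg hQnn _ i k)
    _ ≤ C ^ (t / m) := by simpa using hq (t / m) i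

lemma summable_pow_div {C : ℝ} (hC0 : 0 < C) (hC1 : C < 1) (m : ℕ) (hm : 1 ≤ m) :
    Summable (fun t : ℕ => C ^ (t / m)) := by
  have hr0 : (0:ℝ) < C ^ ((m:ℝ)⁻¹) := Real.rpow_pos_of_pos hC0 _
  have hr1 : C ^ ((m:ℝ)⁻¹) < 1 :=
    Real.rpow_lt_one hC0.le hC1 (by positivity)
  refine Summable.of_nonneg_of_le (fun t => by positivity)
    (fun t => ?_) ((summable_geometric_of_lt_one hr0.le hr1).mul_left C⁻¹)
  -- C ^ (t / m) ≤ C⁻¹ * (C ^ (1/m)) ^ t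
  have h1 : (C ^ ((m:ℝ)⁻¹)) ^ t = C ^ ((t : ℝ) * (m:ℝ)⁻¹) := by
    rw [← Real.rpow_natCast (C ^ ((m:ℝ)⁻¹)) t, ← Real.rpow_mul hC0.le, mul_comm]
  have h2 : C⁻¹ * (C ^ ((m:ℝ)⁻¹)) ^ t = C ^ ((t : ℝ) * (m:ℝ)⁻¹ - 1) := by
    rw [h1, Real.rpow_sub hC0, Real.rpow_one, div_eq_inv_mul]
  rw [h2]
  have h3 : C ^ (t / m) = C ^ ((t / m : ℕ) : ℝ) := by
    rw [Real.rpow_natCast]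
  rw [h3]
  apply Real.rpow_le_rpow_of_exponent_ge hC0 hC1.le
  -- (t:ℝ) * m⁻¹ - 1 ≤ (t/m : ℕ)
  have hmpos : (0:ℝ) < m := by exact_mod_cast hm
  have key : (t:ℝ) < m * ((t / m : ℕ) + 1) := by
    exact_mod_cast Nat.lt_mul_div_succ t (show 0 < m by omega)
  rw [sub_le_iff_le_add, mul_inv_le_iff₀ hmpos]
  linarith

end sub


open Classical in
lemma path_sum (Q : Matrix (Fin d) (Fin d) ℝ) :
    ∀ (t : ℕ) (i : Fin d),
      ∑ f ∈ Finset.univ.filter (fun f : Fin (t+1) → Fin d => f 0 = i),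
        ∏ k : Fin t, Q (f k.castSucc) (f k.succ)
      = ∑ j, (Q ^ t) i j := by
  intro t
  induction t with
  | zero =>
      intro i
      have : Finset.univ.filter (fun f : Fin 1 → Fin d => f 0 = i)
          = {fun _ => i} := by
        ext f
        simp only [Finset.mem_filter, Finset.mem_univ, true_and, Finset.mem_singleton]
        constructor
        · intro h; funext k; rw [Subsingleton.elim k 0, h]
        · intro h; rw [h]
      rw [this]
      simp [Matrix.one_apply]
  | succ t ih =>
      intro i
      rw [Finset.sum_filter]
      set e := Fin.consEquiv (fun _ : Fin (t+2) => Fin d) with he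
      rw [← Equiv.sum_comp e]
      have hconsform : ∀ (p : Fin d × (Fin (t+1) → Fin d)),
          (if e p 0 = i then
            ∏ k : Fin (t+1), Q (e p k.castSucc) (e p k.succ)
          else 0)
          = (if p.1 = i then
              Q p.1 (p.2 0) * ∏ k : Fin t, Q (p.2 k.castSucc) (p.2 k.succ) else 0) := by
        rintro ⟨a, g⟩
        simp only [he, Fin.consEquiv_apply, Fin.cons_zero]
        congr 1
        rw [Fin.prod_univ_succ]
        simp only [Fin.castSucc_zero, Fin.cons_zero, ← Fin.succ_castSucc, Fin.cons_succ]
      simp_rw [hconsform]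
      rw [Fintype.sum_prod_type]
      have hpull : ∀ x : Fin d, (∑ g : Fin (t+1) → Fin d,
          if x = i then Q x (g 0) * ∏ k : Fin t, Q (g k.castSucc) (g k.succ) else 0)
          = if x = i then ∑ g : Fin (t+1) → Fin d,
              Q x (g 0) * ∏ k : Fin t, Q (g k.castSucc) (g k.succ) else 0 := by
        intro x; split <;> simp
      simp only [hpull]
      rw [Finset.sum_ite_eq' Finset.univ i
        (fun a => ∑ g : Fin (t+1) → Fin d, Q a (g 0) * ∏ k : Fin t, Q (g k.castSucc) (g k.succ))]
      simp only [Finset.mem_univ, if_true]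
      -- now: ∑ g, Q i (g 0) * ∏ ... = ∑ j, (Q^(t+1)) i j
      rw [← Finset.sum_fiberwise Finset.univ (fun g : Fin (t+1) → Fin d => g 0)
        (fun g => Q i (g 0) * ∏ k : Fin t, Q (g k.castSucc) (g k.succ))]
      have : ∀ j, ∑ g ∈ Finset.univ.filter (fun g : Fin (t+1) → Fin d => g 0 = j),
          Q i (g 0) * ∏ k : Fin t, Q (g k.castSucc) (g k.succ)
          = Q i j * ∑ l, (Q ^ t) j l := by
        intro j
        rw [← ih j, Finset.mul_sum]
        refine Finset.sum_congr rfl fun g hg => ?_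
        rw [Finset.mem_filter] at hg
        rw [hg.2]
      simp_rw [this]
      have hpow : ∀ l, (Q ^ (t+1)) i l = ∑ j, Q i j * (Q ^ t) j l := by
        intro l
        rw [pow_succ', Matrix.mul_apply]
      simp_rw [hpow, Finset.mul_sum]
      rw [Finset.sum_comm]


section cyl
variable {Ω : Type*} [MeasureSpace Ω] {I : ℕ → Ω → Fin d} {init : Fin d → ENNReal}


lemma cyl_bound (hchain : IsMarkovChain I init P) (t : ℕ)
    (F : Finset (Fin (t+1) → Fin d)) :
    ℙ {ω | (fun k : Fin (t+1) => I k ω) ∈ F}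
      ≤ ∑ f ∈ F, init (f 0) *
          ∏ k : Fin t, ENNReal.ofReal (P (f k.castSucc) (f k.succ)) := by
  classical
  set ext : (Fin (t+1) → Fin d) → ℕ → Fin d :=
    fun f k => f ⟨min k t, by omega⟩ with hext
  have hsub : {ω | (fun k : Fin (t+1) => I k ω) ∈ F}
      ⊆ ⋃ f ∈ F, {ω | ∀ k ≤ t, I k ω = ext f k} := by
    intro ω hω
    refine Set.mem_biUnion hω ?_
    intro k hk
    show I k ω = I ((⟨min k t, by omega⟩ : Fin (t+1)) : ℕ) ω
    simp [min_eq_left hk]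
  refine le_trans (measure_mono hsub) ?_
  refine le_trans (measure_biUnion_finset_le F _) ?_
  refine Finset.sum_le_sum fun f _ => ?_
  rw [hchain t (ext f)]
  have h0 : ext f 0 = f 0 := by
    simp only [hext]
    congr 1
  rw [h0]
  refine mul_le_mul_right ?_ _
  have hprod : (∏ k : Fin t, ENNReal.ofReal (P (f k.castSucc) (f k.succ)))
      = ∏ k ∈ Finset.range t, ENNReal.ofReal (P (ext f k) (ext f (k+1))) := by
    rw [← Fin.prod_univ_eq_prod_range]
    refine Finset.prod_congr rfl fun k _ => ?_
    have h1 : ext f ↑k = f k.castSucc := by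
      simp only [hext]
      congr 1
      have := k.isLt
      simp [Fin.ext_iff]
      try omega
    have h2 : ext f (↑k + 1) = f k.succ := by
      simp only [hext]
      congr 1
      have := k.isLt
      simp [Fin.ext_iff]
      try omega
    rw [h1, h2]
  rw [hprod]


end cyl
end auxAll

section probparts
variable {Ω : Type*} [MeasureSpace Ω] [IsProbabilityMeasure (ℙ : Measure Ω)]

lemma measurable_posLog_abs : Measurable (fun x : ℝ => posLog |x|) :=
  (Real.measurable_log.max measurable_const).comp measurable_abs

/-- Borel–Cantelli consequence: identically distributed nonnegative integrable
variables grow slower than linearly. -/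
lemma eventually_le_of_ident (Y : ℕ → Ω → ℝ)
    (hident : ∀ t, IdentDistrib (Y t) (Y 0) ℙ ℙ)
    (hint : Integrable (Y 0) ℙ) (hnonneg : ∀ t ω, 0 ≤ Y t ω)
    {ε : ℝ} (hε : 0 < ε) :
    ∀ᵐ ω ∂(ℙ : Measure Ω), ∀ᶠ t : ℕ in atTop, Y t ω ≤ ε * t := by
  set s : ℕ → Set Ω := fun t => {ω | Y t ω / ε ∈ Set.Ioi (t : ℝ)} with hs
  have hmeaseq : ∀ t, ℙ (s t) = ℙ {ω | Y 0 ω / ε ∈ Set.Ioi (t : ℝ)} := by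
    intro t
    have h1 : IdentDistrib (fun ω => Y t ω / ε) (fun ω => Y 0 ω / ε) ℙ ℙ :=
      (hident t).comp (measurable_id.div_const ε)
    exact h1.measure_mem_eq measurableSet_Ioi
  have htsum : ∑' t : ℕ, ℙ (s t) ≠ ⊤ := by
    rw [funext hmeaseq]
    refine (ProbabilityTheory.tsum_prob_mem_Ioi_lt_top (hint.div_const ε) ?_).ne
    intro ω
    exact div_nonneg (hnonneg 0 ω) hε.le
  have hlim := measure_limsup_atTop_eq_zero htsum
  rw [measure_eq_zero_iff_ae_notMem] at hlim
  filter_upwards [hlim] with ω hω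
  rw [mem_limsup_iff_frequently_mem, Filter.not_frequently] at hω
  filter_upwards [hω] with t ht
  simp only [hs, Set.mem_setOf_eq, Set.mem_Ioi, not_lt] at ht
  rwa [div_le_iff₀ hε, mul_comm] at ht

end probparts

section parts
variable {Ω : Type*} [MeasureSpace Ω] [IsProbabilityMeasure (ℙ : Measure Ω)]
  {d : ℕ} {I : ℕ → Ω → Fin d} {init : Fin d → ENNReal} {P : Matrix (Fin d) (Fin d) ℝ}

lemma init_le_one (hchain : IsMarkovChain I init P) (i : Fin d) : init i ≤ 1 := by
  have := hchain 0 (fun _ => i)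
  simp only [Finset.range_zero, Finset.prod_empty, mul_one] at this
  rw [← this]
  exact prob_le_one

lemma null_pair (hchain : IsMarkovChain I init P) (t : ℕ) {i j : Fin d}
    (hij : P i j = 0) :
    ℙ {ω | I t ω = i ∧ I (t + 1) ω = j} = 0 := by
  classical
  set F : Finset (Fin (t+2) → Fin d) :=
    Finset.univ.filter (fun f => f ⟨t, by omega⟩ = i ∧ f ⟨t+1, by omega⟩ = j) with hF
  have hsub : {ω | I t ω = i ∧ I (t + 1) ω = j}
      ⊆ {ω | (fun k : Fin (t+2) => I k ω) ∈ F} := by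
    intro ω hω
    simp only [Set.mem_setOf_eq, hF, Finset.mem_filter, Finset.mem_univ, true_and]
    exact hω
  refine le_antisymm ?_ (by simp)
  refine le_trans (measure_mono hsub) (le_trans (cyl_bound hchain (t+1) F) ?_)
  refine le_of_eq (Finset.sum_eq_zero fun f hf => ?_)
  rw [hF, Finset.mem_filter] at hf
  have hzero : (∏ k : Fin (t+1), ENNReal.ofReal (P (f k.castSucc) (f k.succ))) = 0 := by
    refine Finset.prod_eq_zero (Finset.mem_univ (⟨t, by omega⟩ : Fin (t+1))) ?_
    have h1 : (⟨t, by omega⟩ : Fin (t+1)).castSucc = (⟨t, by omega⟩ : Fin (t+2)) := rfl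
    have h2 : (⟨t, by omega⟩ : Fin (t+1)).succ = (⟨t+1, by omega⟩ : Fin (t+2)) := rfl
    rw [h1, h2, hf.2.1, hf.2.2, hij]
    simp
  rw [hzero, mul_zero]


lemma stay_bound (hd : 1 ≤ d) (hchain : IsMarkovChain I init P)
    (hPnn : ∀ i j, 0 ≤ P i j) (hProw : ∀ i, ∑ j, P i j = 1) :
    ∃ m : ℕ, 1 ≤ m ∧ ∃ C : ℝ, 0 < C ∧ C < 1 ∧ ∀ t : ℕ,
      ℙ {ω | ∀ k ≤ t, ¬ Essential P (I k ω)}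
        ≤ ENNReal.ofReal ((d : ℝ) * C ^ (t / m)) := by
  classical
  obtain ⟨m, hm1, δ, hδ0, hδ1, hδ⟩ := exists_unif_escape hd hPnn hProw
  set C : ℝ := 1 - δ / 2 with hC
  have hC0 : 0 < C := by rw [hC]; linarith
  have hC1 : C < 1 := by rw [hC]; linarith
  refine ⟨m, hm1, C, hC0, hC1, fun t => ?_⟩
  set Q : Matrix (Fin d) (Fin d) ℝ :=
    Matrix.of (fun i j => if Essential P j then 0 else P i j) with hQ
  have hQnn : ∀ i j, 0 ≤ Q i j := by
    intro i j; rw [hQ]; simp only [Matrix.of_apply]; split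
    · exact le_refl 0
    · exact hPnn i j
  have hQle : ∀ i j, Q i j ≤ P i j := by
    intro i j; rw [hQ]; simp only [Matrix.of_apply]; split
    · exact hPnn i j
    · exact le_refl _
  have hrow1 : ∀ s i, ∑ j, (Q ^ s) i j ≤ 1 := by
    intro s i
    calc ∑ j, (Q ^ s) i j ≤ ∑ j, (P ^ s) i j :=
          Finset.sum_le_sum fun j _ => sub_pow_le hPnn hQnn hQle s i j
      _ = 1 := pow_row_sum hProw s i
  -- essential columns of Q^m vanish
  have hQcol : ∀ s, 1 ≤ s → ∀ i j, Essential P j → (Q ^ s) i j = 0 := by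
    intro s hs i j hj
    obtain ⟨n, rfl⟩ : ∃ n, s = n + 1 := ⟨s - 1, by omega⟩
    rw [pow_succ, Matrix.mul_apply]
    refine Finset.sum_eq_zero fun k _ => ?_
    have : Q k j = 0 := by rw [hQ]; simp [hj]
    rw [this, mul_zero]
  have hQm : ∀ i, ∑ j, (Q ^ m) i j ≤ C := by
    intro i
    have hsplit := Finset.sum_filter_add_sum_filter_not Finset.univ
      (Essential P) (fun j => (Q ^ m) i j)
    have hzero : ∑ j ∈ Finset.univ.filter (Essential P), (Q ^ m) i j = 0 :=
      Finset.sum_eq_zero fun j hj => hQcol m hm1 i j (Finset.mem_filter.1 hj).2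
    have h1 : ∑ j, (Q ^ m) i j
        = ∑ j ∈ Finset.univ.filter (fun j => ¬ Essential P j), (Q ^ m) i j := by
      rw [← hsplit, hzero, zero_add]
    rw [h1]
    have h2 : ∑ j ∈ Finset.univ.filter (fun j => ¬ Essential P j), (Q ^ m) i j
        ≤ ∑ j ∈ Finset.univ.filter (fun j => ¬ Essential P j), (P ^ m) i j :=
      Finset.sum_le_sum fun j _ => sub_pow_le hPnn hQnn hQle m i j
    have h3 : ∑ j ∈ Finset.univ.filter (fun j => ¬ Essential P j), (P ^ m) i j
        = 1 - ∑ j ∈ Finset.univ.filter (Essential P), (P ^ m) i j := by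
      have := Finset.sum_filter_add_sum_filter_not Finset.univ
        (Essential P) (fun j => (P ^ m) i j)
      rw [← pow_row_sum hProw m i]
      linarith [this]
    have h4 := hδ i
    calc ∑ j ∈ Finset.univ.filter (fun j => ¬ Essential P j), (Q ^ m) i j
        ≤ 1 - ∑ j ∈ Finset.univ.filter (Essential P), (P ^ m) i j := by
          rw [← h3]; exact h2
      _ ≤ 1 - δ := by linarith
      _ ≤ C := by rw [hC]; linarith
  have hdecay := sub_decay hQnn hC0.le hC1.le hrow1 hQm
  -- now the measure bound
  set F : Finset (Fin (t+1) → Fin d) :=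
    Finset.univ.filter (fun f => ∀ k, ¬ Essential P (f k)) with hF
  have hsub : {ω | ∀ k ≤ t, ¬ Essential P (I k ω)}
      ⊆ {ω | (fun k : Fin (t+1) => I k ω) ∈ F} := by
    intro ω hω
    simp only [Set.mem_setOf_eq, hF, Finset.mem_filter, Finset.mem_univ, true_and]
    intro k
    exact hω k (by omega)
  refine le_trans (measure_mono hsub) (le_trans (cyl_bound hchain t F) ?_)
  have hstep1 : ∀ f ∈ F, init (f 0) *
      (∏ k : Fin t, ENNReal.ofReal (P (f k.castSucc) (f k.succ)))
      ≤ ENNReal.ofReal (∏ k : Fin t, Q (f k.castSucc) (f k.succ)) := by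
    intro f hf
    rw [hF, Finset.mem_filter] at hf
    have hPQ : (∏ k : Fin t, P (f k.castSucc) (f k.succ))
        = ∏ k : Fin t, Q (f k.castSucc) (f k.succ) := by
      refine Finset.prod_congr rfl fun k _ => ?_
      rw [hQ]; simp [hf.2 k.succ]
    calc init (f 0) * (∏ k : Fin t, ENNReal.ofReal (P (f k.castSucc) (f k.succ)))
        ≤ 1 * (∏ k : Fin t, ENNReal.ofReal (P (f k.castSucc) (f k.succ))) :=
          mul_le_mul_left (init_le_one hchain (f 0)) _
      _ = ∏ k : Fin t, ENNReal.ofReal (P (f k.castSucc) (f k.succ)) := one_mul _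
      _ = ENNReal.ofReal (∏ k : Fin t, P (f k.castSucc) (f k.succ)) :=
          (ENNReal.ofReal_prod_of_nonneg fun k _ => hPnn _ _).symm
      _ = ENNReal.ofReal (∏ k : Fin t, Q (f k.castSucc) (f k.succ)) := by rw [hPQ]
  refine le_trans (Finset.sum_le_sum hstep1) ?_
  rw [← ENNReal.ofReal_sum_of_nonneg
    (fun f _ => Finset.prod_nonneg fun k _ => hQnn _ _)]
  refine ENNReal.ofReal_le_ofReal ?_
  -- real inequality
  calc ∑ f ∈ F, ∏ k : Fin t, Q (f k.castSucc) (f k.succ)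
      ≤ ∑ f : Fin (t+1) → Fin d, ∏ k : Fin t, Q (f k.castSucc) (f k.succ) :=
        Finset.sum_le_sum_of_subset_of_nonneg (Finset.subset_univ _)
          (fun f _ _ => Finset.prod_nonneg fun k _ => hQnn _ _)
    _ = ∑ i : Fin d, ∑ f ∈ Finset.univ.filter (fun f : Fin (t+1) → Fin d => f 0 = i),
          ∏ k : Fin t, Q (f k.castSucc) (f k.succ) :=
        (Finset.sum_fiberwise Finset.univ (fun f : Fin (t+1) → Fin d => f 0)
          (fun f => ∏ k : Fin t, Q (f k.castSucc) (f k.succ))).symm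
    _ = ∑ i : Fin d, ∑ j, (Q ^ t) i j := by
        refine Finset.sum_congr rfl fun i _ => path_sum Q t i
    _ ≤ ∑ _i : Fin d, C ^ (t / m) := Finset.sum_le_sum fun i _ => hdecay t i
    _ = (d : ℝ) * C ^ (t / m) := by
        rw [Finset.sum_const, Finset.card_univ, Fintype.card_fin, nsmul_eq_mul]

end parts

theorem stmt13
    {Ω : Type*} [MeasureSpace Ω] [IsProbabilityMeasure (ℙ : Measure Ω)]
    {d : ℕ} (hd : 1 ≤ d)
    (γ : ℝ) (hγ0 : 0 < γ) (hγ1 : γ < 1)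
    (I : ℕ → Ω → Fin d) (hmeasI : ∀ t, Measurable (I t))
    (init : Fin d → ENNReal) (P : Matrix (Fin d) (Fin d) ℝ)
    (hPnn : ∀ i j, 0 ≤ P i j) (hProw : ∀ i, ∑ j, P i j = 1)
    (hchain : IsMarkovChain I init P)
    (Rarr : Fin d → Fin d → ℕ → Ω → ℝ)
    (hmeasR : ∀ i j t, Measurable (Rarr i j t))
    (hindepArr : iIndepFun
      (fun q : Fin d × Fin d × ℕ => Rarr q.1 q.2.1 q.2.2) ℙ)
    (hident : ∀ i j t, IdentDistrib (Rarr i j t) (Rarr i j 0) ℙ ℙ)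
    (hindepIC : IndepFun (fun ω => fun q : Fin d × Fin d × ℕ => Rarr q.1 q.2.1 q.2.2 ω)
      (fun ω => fun t : ℕ => I t ω) ℙ)
    (hlog : ∀ i j, Essential P i → 0 < P i j →
      Integrable (fun ω => posLog |Rarr i j 0 ω|) ℙ) :
    ∀ᵐ ω ∂(ℙ : Measure Ω),
      Summable (fun t => γ ^ t * |Rarr (I t ω) (I (t + 1) ω) t ω|) := by
  classical
  have hlogγ : Real.log γ < 0 := Real.log_neg hγ0 hγ1
  set ε : ℝ := -Real.log γ / 2 with hε
  have hεpos : 0 < ε := by rw [hε]; linarith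
  set c : ℝ := γ * Real.exp ε with hc
  have hc0 : 0 < c := mul_pos hγ0 (Real.exp_pos ε)
  have hc1 : c < 1 := by
    rw [← Real.log_neg_iff hc0, hc,
      Real.log_mul (ne_of_gt hγ0) (Real.exp_ne_zero ε), Real.log_exp, hε]
    linarith
  -- almost surely all transitions taken have positive probability
  have hZ : ℙ (⋃ t : ℕ, {ω | P (I t ω) (I (t+1) ω) = 0}) = 0 := by
    refine measure_iUnion_null fun t => ?_
    have hcover : {ω | P (I t ω) (I (t+1) ω) = 0}
        ⊆ ⋃ p : Fin d × Fin d, {ω | I t ω = p.1 ∧ I (t+1) ω = p.2 ∧ P p.1 p.2 = 0} := by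
      intro ω hω
      exact Set.mem_iUnion.2 ⟨(I t ω, I (t+1) ω), rfl, rfl, hω⟩
    refine measure_mono_null hcover (measure_iUnion_null fun p => ?_)
    by_cases hp : P p.1 p.2 = 0
    · refine measure_mono_null ?_ (null_pair hchain t hp)
      intro ω hω
      exact ⟨hω.1, hω.2.1⟩
    · have hemp : {ω | I t ω = p.1 ∧ I (t+1) ω = p.2 ∧ P p.1 p.2 = 0} = (∅ : Set Ω) := by
        ext ω
        simp only [Set.mem_setOf_eq, Set.mem_empty_iff_false, iff_false]
        rintro ⟨-, -, h⟩
        exact hp h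
      rw [hemp]
      exact measure_empty
  have hE2 : ∀ᵐ ω ∂(ℙ : Measure Ω), ∀ t : ℕ, 0 < P (I t ω) (I (t+1) ω) := by
    filter_upwards [measure_eq_zero_iff_ae_notMem.1 hZ] with ω hω t
    have hne : P (I t ω) (I (t+1) ω) ≠ 0 := fun h => hω (Set.mem_iUnion.2 ⟨t, h⟩)
    exact lt_of_le_of_ne (hPnn _ _) (Ne.symm hne)
  -- almost surely eventually essential
  obtain ⟨m, hm1, C, hC0, hC1, hstay⟩ := stay_bound hd hchain hPnn hProw
  have hBC : ℙ (limsup (fun t => {ω | ¬ Essential P (I t ω)}) atTop) = 0 := by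
    refine measure_limsup_atTop_eq_zero ?_
    have hle : ∀ t, ℙ {ω | ¬ Essential P (I t ω)}
        ≤ ENNReal.ofReal ((d:ℝ) * C ^ (t/m)) := by
      intro t
      have hsub : {ω | ¬ Essential P (I t ω)}
          ⊆ {ω | ∀ k ≤ t, ¬ Essential P (I k ω)}
            ∪ (⋃ s : ℕ, {ω | P (I s ω) (I (s+1) ω) = 0}) := by
        intro ω hω
        by_cases hz : ω ∈ ⋃ s : ℕ, {ω | P (I s ω) (I (s+1) ω) = 0}
        · exact Or.inr hz
        · left
          intro k hk hessk
          have hpos : ∀ s : ℕ, 0 < P (I s ω) (I (s+1) ω) := by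
            intro s
            have hne : P (I s ω) (I (s+1) ω) ≠ 0 := fun h => hz (Set.mem_iUnion.2 ⟨s, h⟩)
            exact lt_of_le_of_ne (hPnn _ _) (Ne.symm hne)
          have hprop : ∀ l, k ≤ l → l ≤ t → Essential P (I l ω) := by
            intro l hkl
            induction l, hkl using Nat.le_induction with
            | base => intro _; exact hessk
            | succ n hn ih =>
              intro hnt
              exact essential_closed hPnn (ih (by omega)) (hpos n)
          exact hω (hprop t hk le_rfl)
      calc ℙ {ω | ¬ Essential P (I t ω)}
          ≤ ℙ ({ω | ∀ k ≤ t, ¬ Essential P (I k ω)}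
              ∪ (⋃ s : ℕ, {ω | P (I s ω) (I (s+1) ω) = 0})) := measure_mono hsub
        _ ≤ ℙ {ω | ∀ k ≤ t, ¬ Essential P (I k ω)}
              + ℙ (⋃ s : ℕ, {ω | P (I s ω) (I (s+1) ω) = 0}) := measure_union_le _ _
        _ = ℙ {ω | ∀ k ≤ t, ¬ Essential P (I k ω)} := by rw [hZ, add_zero]
        _ ≤ ENNReal.ofReal ((d:ℝ) * C ^ (t/m)) := hstay t
    refine ne_top_of_le_ne_top ?_ (ENNReal.tsum_le_tsum hle)
    have hsum : Summable (fun t : ℕ => (d:ℝ) * C ^ (t/m)) :=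
      (summable_pow_div hC0 hC1 m hm1).mul_left _
    rw [← ENNReal.ofReal_tsum_of_nonneg (fun t => by positivity) hsum]
    exact ENNReal.ofReal_ne_top
  have hE1 : ∀ᵐ ω ∂(ℙ : Measure Ω), ∀ᶠ t : ℕ in atTop, Essential P (I t ω) := by
    filter_upwards [measure_eq_zero_iff_ae_notMem.1 hBC] with ω hω
    rw [mem_limsup_iff_frequently_mem, Filter.not_frequently] at hω
    filter_upwards [hω] with t ht
    simpa using ht
  -- Borel–Cantelli for the rewards over good pairs
  have hE3 : ∀ᵐ ω ∂(ℙ : Measure Ω), ∀ p : Fin d × Fin d, ∀ᶠ t : ℕ in atTop,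
      (Essential P p.1 → 0 < P p.1 p.2 → posLog |Rarr p.1 p.2 t ω| ≤ ε * t) := by
    rw [ae_all_iff]
    intro p
    by_cases hgood : Essential P p.1 ∧ 0 < P p.1 p.2
    · have key := eventually_le_of_ident (fun t ω => posLog |Rarr p.1 p.2 t ω|)
        (fun t => (hident p.1 p.2 t).comp measurable_posLog_abs)
        (hlog p.1 p.2 hgood.1 hgood.2)
        (fun t ω => le_max_right _ _) hεpos
      filter_upwards [key] with ω hω
      filter_upwards [hω] with t ht _ _
      exact ht
    · exact ae_of_all _ fun ω => Eventually.of_forall fun t h1 h2 => absurd ⟨h1, h2⟩ hgood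
  -- combine
  filter_upwards [hE1, hE2, hE3] with ω h1 h2 h3
  have hall : ∀ᶠ t : ℕ in atTop, ∀ p : Fin d × Fin d,
      (Essential P p.1 → 0 < P p.1 p.2 → posLog |Rarr p.1 p.2 t ω| ≤ ε * t) :=
    eventually_all.2 h3
  have hfin : ∀ᶠ t : ℕ in atTop, γ ^ t * |Rarr (I t ω) (I (t+1) ω) t ω| ≤ c ^ t := by
    filter_upwards [h1, hall] with t hEss hB
    have hb := hB (I t ω, I (t+1) ω) hEss (h2 t)
    have habs : |Rarr (I t ω) (I (t+1) ω) t ω| ≤ Real.exp (ε * t) := by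
      rcases le_or_gt |Rarr (I t ω) (I (t+1) ω) t ω| 1 with h | h
      · exact h.trans (Real.one_le_exp (mul_nonneg hεpos.le (Nat.cast_nonneg t)))
      · have hxpos : (0:ℝ) < |Rarr (I t ω) (I (t+1) ω) t ω| := by linarith
        calc |Rarr (I t ω) (I (t+1) ω) t ω|
            = Real.exp (Real.log |Rarr (I t ω) (I (t+1) ω) t ω|) :=
              (Real.exp_log hxpos).symm
          _ ≤ Real.exp (ε * t) := Real.exp_le_exp.2 (le_trans (le_max_left _ _) hb)
    calc γ ^ t * |Rarr (I t ω) (I (t+1) ω) t ω|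
        ≤ γ ^ t * Real.exp (ε * t) :=
          mul_le_mul_of_nonneg_left habs (pow_nonneg hγ0.le t)
      _ = c ^ t := by
          rw [mul_comm ε (t:ℝ), Real.exp_nat_mul, hc, mul_pow]
  obtain ⟨T, hT⟩ := Filter.eventually_atTop.1 hfin
  rw [← summable_nat_add_iff T]
  refine Summable.of_nonneg_of_le (fun n => ?_) (fun n => hT (n+T) (by omega)) ?_
  · positivity
  · refine ((summable_geometric_of_lt_one hc0.le hc1).mul_right (c ^ T)).congr fun n => ?_
    rw [← pow_add]
end

section
/- Let R_1,...,R_d be independent real-valued random variables, α > 0, L slowly varying, and c_1,...,c_d ∈ [0,∞) with at least one c_j > 0, such that lim_{x→∞} P[|R_j| > x]/(x^{-α}L(x)) = c_j for every j. Then the Euclidean norm of R = (R_1,...,R_d) satisfies lim_{x→∞} P[|R| > x]/(x^{-α}L(x)) = c_1 + ... + c_d. -/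
open MeasureTheory ProbabilityTheory Filter Topology

-- aux: sqrt of sum of squares ≤ sum of abs, and ≥ each abs
lemma aux_sqrt_le {d : ℕ} (a : Fin d → ℝ) :
    Real.sqrt (∑ j, a j ^ 2) ≤ ∑ j, |a j| := by
  have h1 : ∑ j, a j ^ 2 ≤ (∑ j, |a j|) ^ 2 := by
    calc ∑ j, a j ^ 2 = ∑ j, |a j| ^ 2 := by simp [sq_abs]
    _ ≤ (∑ j, |a j|) ^ 2 := Finset.sum_sq_le_sq_sum_of_nonneg (fun i _ => abs_nonneg _)
  calc Real.sqrt (∑ j, a j ^ 2) ≤ Real.sqrt ((∑ j, |a j|) ^ 2) := Real.sqrt_le_sqrt h1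
  _ = ∑ j, |a j| := by
      rw [Real.sqrt_sq (Finset.sum_nonneg fun i _ => abs_nonneg _)]

lemma aux_abs_le_sqrt {d : ℕ} (a : Fin d → ℝ) (j : Fin d) :
    |a j| ≤ Real.sqrt (∑ i, a i ^ 2) := by
  rw [← Real.sqrt_sq_eq_abs]
  exact Real.sqrt_le_sqrt (Finset.single_le_sum (fun i _ => sq_nonneg (a i)) (Finset.mem_univ j))

lemma aux_prod_one_sub {d : ℕ} (p : Fin d → ℝ) (h0 : ∀ j, 0 ≤ p j) (h1 : ∀ j, p j ≤ 1) :
    ∏ j, (1 - p j) ≤ 1 / (1 + ∑ j, p j) := by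
  have hs : 0 ≤ ∑ j, p j := Finset.sum_nonneg fun j _ => h0 j
  calc ∏ j, (1 - p j) ≤ ∏ j, Real.exp (-(p j)) := by
        apply Finset.prod_le_prod
        · intro j _; linarith [h1 j]
        · intro j _; linarith [Real.add_one_le_exp (-(p j))]
  _ = Real.exp (-(∑ j, p j)) := by rw [← Real.exp_sum]; simp
  _ ≤ 1 / (1 + ∑ j, p j) := by
      rw [Real.exp_neg, one_div]
      exact inv_anti₀ (by linarith) (by linarith [Real.add_one_le_exp (∑ j, p j)])



/-- A function `L` is slowly varying (at infinity) if `L(tx)/L(x) → 1` for every `t > 0`. -/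
def SlowlyVarying (L : ℝ → ℝ) : Prop :=
  ∀ t > (0:ℝ), Tendsto (fun x => L (t * x) / L x) atTop (nhds 1)

lemma aux_tail_zero {Ω : Type*} [MeasureSpace Ω] [IsProbabilityMeasure (ℙ : Measure Ω)]
    (Y : Ω → ℝ) (hY : Measurable Y) :
    Tendsto (fun x : ℝ => (ℙ {ω | |Y ω| > x}).toReal) atTop (𝓝 0) := by
  have h1 : Tendsto (fun x : ℝ => ℙ {ω | |Y ω| > x}) atTop
      (𝓝 (ℙ (⋂ x : ℝ, {ω | |Y ω| > x}))) := by
    apply tendsto_measure_iInter_atTop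
    · exact fun x => (measurableSet_lt measurable_const hY.abs).nullMeasurableSet
    · intro a b hab ω hω
      exact lt_of_le_of_lt hab hω
    · exact ⟨0, measure_ne_top _ _⟩
  have h2 : (⋂ x : ℝ, {ω | |Y ω| > x}) = ∅ := by
    ext ω
    simp only [Set.mem_iInter, Set.mem_setOf_eq, Set.mem_empty_iff_false, iff_false, not_forall,
      not_lt]
    exact ⟨|Y ω|, le_refl _⟩
  rw [h2, measure_empty] at h1
  have := (ENNReal.tendsto_toReal (by simp : (0:ENNReal) ≠ ⊤)).comp h1
  simpa [Function.comp_def] using this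

lemma aux_qratio (α : ℝ) (L : ℝ → ℝ) (hLpos : ∀ x > (0:ℝ), 0 < L x) (hL : SlowlyVarying L)
    (t : ℝ) (ht : 0 < t) :
    Tendsto (fun x => ((t*x) ^ (-α) * L (t*x)) / (x ^ (-α) * L x)) atTop (𝓝 (t ^ (-α))) := by
  have h1 : ∀ᶠ x in atTop, ((t*x) ^ (-α) * L (t*x)) / (x ^ (-α) * L x)
      = t ^ (-α) * (L (t*x) / L x) := by
    filter_upwards [eventually_gt_atTop (0:ℝ)] with x hx
    have hL1 : L x ≠ 0 := (hLpos x hx).ne'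
    have hx1 : (x:ℝ) ^ (-α) ≠ 0 := (Real.rpow_pos_of_pos hx _).ne'
    rw [Real.mul_rpow ht.le hx.le]
    field_simp
  have h2 : Tendsto (fun x => t ^ (-α) * (L (t*x) / L x)) atTop (𝓝 (t ^ (-α) * 1)) :=
    (hL t ht).const_mul _
  rw [mul_one] at h2
  exact h2.congr' (h1.mono fun x hx => hx.symm)

set_option maxHeartbeats 1600000 in
theorem stmt18
    {Ω : Type*} [MeasureSpace Ω] [IsProbabilityMeasure (ℙ : Measure Ω)]
    {d : ℕ} (hd : 1 ≤ d)
    (R : Fin d → Ω → ℝ) (hmeas : ∀ j, Measurable (R j))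
    (hindep : iIndepFun R ℙ)
    (α : ℝ) (hα : 0 < α)
    (L : ℝ → ℝ) (hLpos : ∀ x > (0:ℝ), 0 < L x) (hL : SlowlyVarying L)
    (c : Fin d → ℝ) (hcnn : ∀ j, 0 ≤ c j) (hcpos : ∃ j, 0 < c j)
    (htail : ∀ j, Tendsto (fun x => (ℙ {ω | |R j ω| > x}).toReal / (x ^ (-α) * L x))
      atTop (nhds (c j))) :
    Tendsto (fun x =>
        (ℙ {ω | Real.sqrt (∑ j, (R j ω) ^ 2) > x}).toReal / (x ^ (-α) * L x))
      atTop (nhds (∑ j, c j)) := by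
  classical
  have hd1 : (1:ℝ) ≤ (d:ℝ) := by exact_mod_cast hd
  set q : ℝ → ℝ := fun x => x ^ (-α) * L x with hq
  set P : Fin d → ℝ → ℝ := fun j y => (ℙ {ω | |R j ω| > y}).toReal with hP
  have hqpos : ∀ x : ℝ, 0 < x → 0 < q x := fun x hx =>
    mul_pos (Real.rpow_pos_of_pos hx _) (hLpos x hx)
  have hPnn : ∀ j y, 0 ≤ P j y := fun j y => ENNReal.toReal_nonneg
  have hPle1 : ∀ j y, P j y ≤ 1 := by
    intro j y
    have h := prob_le_one (μ := (ℙ : Measure Ω)) (s := {ω | |R j ω| > y})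
    simpa [hP] using ENNReal.toReal_mono (by simp) h
  have htail' : ∀ j, Tendsto (fun x => P j x / q x) atTop (𝓝 (c j)) := by
    intro j; simpa only [hP, hq] using htail j
  have hP0 : ∀ j, Tendsto (fun y => P j y) atTop (𝓝 0) := by
    intro j; simpa only [hP] using aux_tail_zero (R j) (hmeas j)
  have hsum0 : Tendsto (fun x => ∑ j, P j x) atTop (𝓝 0) := by
    have := tendsto_finset_sum Finset.univ (fun j (_ : j ∈ Finset.univ) => hP0 j)
    simpa using this
  have hK1 : ∀ t : ℝ, 0 < t → ∀ j,
      Tendsto (fun x => P j (t*x) / q x) atTop (𝓝 (c j * t ^ (-α))) := by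
    intro t ht j
    have h1 : Tendsto (fun x => P j (t*x) / q (t*x)) atTop (𝓝 (c j)) :=
      (htail' j).comp (tendsto_id.const_mul_atTop ht)
    have h2' : Tendsto (fun x => q (t*x) / q x) atTop (𝓝 (t ^ (-α))) := by
      simpa only [hq] using aux_qratio α L hLpos hL t ht
    apply (h1.mul h2').congr'
    filter_upwards [eventually_gt_atTop (0:ℝ)] with x hx
    have hqt : q (t*x) ≠ 0 := (hqpos _ (mul_pos ht hx)).ne'
    have hqx : q x ≠ 0 := (hqpos _ hx).ne'
    field_simp
  have hK1sum : ∀ t : ℝ, 0 < t →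
      Tendsto (fun x => (∑ j, P j (t*x)) / q x) atTop (𝓝 (∑ j, c j * t ^ (-α))) := by
    intro t ht
    have := tendsto_finset_sum Finset.univ (fun j (_ : j ∈ Finset.univ) => hK1 t ht j)
    simpa [Finset.sum_div] using this
  have hAmeas : ∀ (j : Fin d) (y : ℝ), MeasurableSet {ω | |R j ω| > y} :=
    fun j y => measurableSet_lt measurable_const (hmeas j).abs
  have hpair : ∀ (i j : Fin d), i ≠ j → ∀ y : ℝ,
      ℙ ({ω | |R i ω| > y} ∩ {ω | |R j ω| > y}) =
        ℙ {ω | |R i ω| > y} * ℙ {ω | |R j ω| > y} := by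
    intro i j hij y
    have h2 := indepFun_iff_measure_inter_preimage_eq_mul.mp (hindep.indepFun hij)
      {z : ℝ | |z| > y} {z : ℝ | |z| > y}
      (measurableSet_lt measurable_const measurable_id.abs)
      (measurableSet_lt measurable_const measurable_id.abs)
    exact h2
  have hindepAll : ∀ y : ℝ,
      ℙ (⋂ j, {ω | |R j ω| ≤ y}) = ∏ j, ℙ {ω | |R j ω| ≤ y} := by
    intro y
    have h2 := hindep.measure_inter_preimage_eq_mul (S := Finset.univ)
      (sets := fun _ => {z : ℝ | |z| ≤ y})
      (fun i _ => measurableSet_le measurable_id.abs measurable_const)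
    simpa using h2
  -- lower bound for the tail of the norm
  have hFlow : ∀ x : ℝ,
      (∑ j, P j x) / (1 + ∑ j, P j x)
        ≤ (ℙ {ω | Real.sqrt (∑ j, (R j ω) ^ 2) > x}).toReal := by
    intro x
    have hsub : (⋃ j, {ω | |R j ω| > x}) ⊆ {ω | Real.sqrt (∑ j, (R j ω) ^ 2) > x} := by
      intro ω hω
      rcases Set.mem_iUnion.mp hω with ⟨j, hj⟩
      exact lt_of_lt_of_le hj (aux_abs_le_sqrt (fun i => R i ω) j)
    have hm1 : MeasurableSet (⋂ j, {ω | |R j ω| ≤ x}) :=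
      MeasurableSet.iInter fun j => measurableSet_le (hmeas j).abs measurable_const
    have hUc : (⋃ j, {ω | |R j ω| > x}) = (⋂ j, {ω | |R j ω| ≤ x})ᶜ := by
      ext ω
      simp [not_le, Set.mem_iInter, not_forall]
    have hval : (ℙ (⋃ j, {ω | |R j ω| > x})).toReal = 1 - ∏ j, (1 - P j x) := by
      rw [hUc, prob_compl_eq_one_sub hm1,
        ENNReal.toReal_sub_of_le prob_le_one (by simp), hindepAll x, ENNReal.toReal_prod,
        ENNReal.toReal_one]
      congr 1
      apply Finset.prod_congr rfl
      intro j _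
      have hcj : {ω | |R j ω| ≤ x} = {ω | |R j ω| > x}ᶜ := by
        ext ω; simp [not_lt]
      rw [hcj, prob_compl_eq_one_sub (hAmeas j x),
        ENNReal.toReal_sub_of_le prob_le_one (by simp)]
      simp [hP]
    have hs : 0 ≤ ∑ j, P j x := Finset.sum_nonneg fun j _ => hPnn j x
    have hle2 : (∑ j, P j x) / (1 + ∑ j, P j x) ≤ 1 - ∏ j, (1 - P j x) := by
      have h := aux_prod_one_sub (fun j => P j x) (fun j => hPnn j x) (fun j => hPle1 j x)
      have h2 : (∑ j, P j x) / (1 + ∑ j, P j x) = 1 - 1 / (1 + ∑ j, P j x) := by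
        field_simp
        ring
      rw [h2]; linarith
    calc (∑ j, P j x) / (1 + ∑ j, P j x) ≤ 1 - ∏ j, (1 - P j x) := hle2
    _ = (ℙ (⋃ j, {ω | |R j ω| > x})).toReal := hval.symm
    _ ≤ (ℙ {ω | Real.sqrt (∑ j, (R j ω) ^ 2) > x}).toReal :=
        ENNReal.toReal_mono (measure_ne_top _ _) (measure_mono hsub)
  -- lower bound function tends to the sum
  have hLBt : Tendsto (fun x => ((∑ j, P j x) / q x) * (1 + ∑ j, P j x)⁻¹)
      atTop (𝓝 (∑ j, c j)) := by
    have h1 : Tendsto (fun x => (∑ j, P j x) / q x) atTop (𝓝 (∑ j, c j)) := by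
      have := hK1sum 1 one_pos
      simp only [one_mul, Real.one_rpow, mul_one] at this
      exact this
    have h2 : Tendsto (fun x => (1 + ∑ j, P j x)⁻¹) atTop (𝓝 1) := by
      have h3 : Tendsto (fun x => 1 + ∑ j, P j x) atTop (𝓝 (1 + 0)) := hsum0.const_add 1
      rw [add_zero] at h3
      simpa using h3.inv₀ (by norm_num)
    simpa using h1.mul h2
  rw [Metric.tendsto_nhds]
  intro δ hδ
  -- lower eventual bound
  have hlow_ev : ∀ᶠ x in atTop, (∑ j, c j) - δ
      < (ℙ {ω | Real.sqrt (∑ j, (R j ω) ^ 2) > x}).toReal / q x := by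
    have hev := hLBt.eventually_const_lt (by linarith : (∑ j, c j) - δ < ∑ j, c j)
    filter_upwards [hev, eventually_gt_atTop (0:ℝ)] with x h1 hx
    have hq0 : 0 < q x := hqpos x hx
    have hs : 0 ≤ ∑ j, P j x := Finset.sum_nonneg fun j _ => hPnn j x
    have heq : ((∑ j, P j x) / (1 + ∑ j, P j x)) / q x
        = ((∑ j, P j x) / q x) * (1 + ∑ j, P j x)⁻¹ := by ring
    calc (∑ j, c j) - δ < ((∑ j, P j x) / q x) * (1 + ∑ j, P j x)⁻¹ := h1
    _ = ((∑ j, P j x) / (1 + ∑ j, P j x)) / q x := heq.symm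
    _ ≤ _ := (div_le_div_iff_of_pos_right hq0).mpr (hFlow x)
  -- choose ε for the upper bound
  have hcont : Tendsto (fun e : ℝ => (∑ j, c j) * ((1 - ((d:ℝ)-1)*e) ^ (-α)))
      (𝓝 0) (𝓝 (∑ j, c j)) := by
    have hc1 : ContinuousAt (fun y : ℝ => y ^ (-α)) 1 :=
      Real.continuousAt_rpow_const 1 (-α) (Or.inl one_ne_zero)
    have hc2 : Tendsto (fun e : ℝ => 1 - ((d:ℝ)-1)*e) (𝓝 0) (𝓝 1) := by
      have hcc : Continuous fun e : ℝ => 1 - ((d:ℝ)-1)*e := by continuity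
      have h := hcc.tendsto 0
      simpa using h
    have h3 := hc1.tendsto.comp hc2
    simp only [Function.comp_def, Real.one_rpow] at h3
    simpa using h3.const_mul (∑ j, c j)
  have hev1 : ∀ᶠ e in 𝓝[>] (0:ℝ),
      (∑ j, c j) * ((1 - ((d:ℝ)-1)*e) ^ (-α)) < (∑ j, c j) + δ/2 :=
    (hcont.eventually_lt_const (by linarith)).filter_mono nhdsWithin_le_nhds
  have hev2 : ∀ᶠ e in 𝓝[>] (0:ℝ), e < 1/(2*(d:ℝ)) :=
    (gt_mem_nhds (by positivity)).filter_mono nhdsWithin_le_nhds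
  have hev3 : ∀ᶠ e in 𝓝[>] (0:ℝ), e ∈ Set.Ioi (0:ℝ) := self_mem_nhdsWithin
  obtain ⟨ε, hε1, hε2, hε3⟩ := (hev1.and (hev2.and hev3)).exists
  have hεsmall := hε2
  have hεpos' : (0:ℝ) < ε := hε3
  have hdpos : (0:ℝ) < (d:ℝ) := by linarith
  have hdε : (d:ℝ) * ε < 1/2 := by
    have h := mul_lt_mul_of_pos_left hεsmall hdpos
    have h2 : (d:ℝ) * (1/(2*(d:ℝ))) = 1/2 := by field_simp
    linarith
  have hd1ε : ((d:ℝ)-1) * ε < 1/2 := by nlinarith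
  set β : ℝ := 1 - ((d:ℝ)-1)*ε with hβ
  have hβpos : 0 < β := by rw [hβ]; linarith
  -- the combinatorial inclusion
  have hincl : ∀ x : ℝ, 0 < x → {ω | Real.sqrt (∑ j, (R j ω) ^ 2) > x} ⊆
      (⋃ j, {ω | |R j ω| > β*x}) ∪ ⋃ i, ⋃ j,
        (if i = j then (∅ : Set Ω) else {ω | |R i ω| > ε*x} ∩ {ω | |R j ω| > ε*x}) := by
    intro x hx ω hω
    simp only [Set.mem_setOf_eq] at hω
    have hsum : x < ∑ j, |R j ω| := lt_of_lt_of_le hω (aux_sqrt_le fun j => R j ω)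
    by_cases hpair2 : ∃ i j, i ≠ j ∧ ε*x < |R i ω| ∧ ε*x < |R j ω|
    · obtain ⟨i, j, hij, hi, hj⟩ := hpair2
      right
      refine Set.mem_iUnion.mpr ⟨i, Set.mem_iUnion.mpr ⟨j, ?_⟩⟩
      rw [if_neg hij]
      exact ⟨hi, hj⟩
    · left
      push_neg at hpair2
      by_cases hone : ∃ i, ε*x < |R i ω|
      · obtain ⟨i, hi⟩ := hone
        refine Set.mem_iUnion.mpr ⟨i, ?_⟩
        have hrest : ∀ j ∈ Finset.univ.erase i, |R j ω| ≤ ε*x := by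
          intro j hj
          have hji : j ≠ i := Finset.ne_of_mem_erase hj
          exact hpair2 i j (fun h => hji h.symm) hi
        have hsplit : ∑ j, |R j ω| = |R i ω| + ∑ j ∈ Finset.univ.erase i, |R j ω| :=
          (Finset.add_sum_erase _ _ (Finset.mem_univ i)).symm
        have hcard : (((Finset.univ.erase i).card : ℕ) : ℝ) = (d:ℝ) - 1 := by
          rw [Finset.card_erase_of_mem (Finset.mem_univ i), Finset.card_univ, Fintype.card_fin,
            Nat.cast_sub hd, Nat.cast_one]
        have hbound : ∑ j ∈ Finset.univ.erase i, |R j ω| ≤ ((d:ℝ)-1) * (ε*x) := by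
          calc ∑ j ∈ Finset.univ.erase i, |R j ω| ≤ ∑ _j ∈ Finset.univ.erase i, ε*x :=
            Finset.sum_le_sum hrest
          _ = (((Finset.univ.erase i).card : ℕ) : ℝ) * (ε*x) := by
              rw [Finset.sum_const, nsmul_eq_mul]
          _ = ((d:ℝ)-1) * (ε*x) := by rw [hcard]
        show β*x < |R i ω|
        have hx2 : x < |R i ω| + ((d:ℝ)-1) * (ε*x) := by
          rw [hsplit] at hsum; linarith
        have : β*x = x - ((d:ℝ)-1)*(ε*x) := by rw [hβ]; ring
        linarith
      · push_neg at hone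
        exfalso
        have hb : ∑ j, |R j ω| ≤ ∑ _j : Fin d, ε*x := Finset.sum_le_sum fun j _ => hone j
        rw [Finset.sum_const, Finset.card_univ, Fintype.card_fin, nsmul_eq_mul] at hb
        nlinarith
  -- measure upper bound
  have hFup : ∀ x : ℝ, 0 < x →
      (ℙ {ω | Real.sqrt (∑ j, (R j ω) ^ 2) > x}).toReal ≤
        (∑ j, P j (β*x)) + (∑ j, P j (ε*x)) * (∑ j, P j (ε*x)) := by
    intro x hx
    set C : Fin d → Fin d → Set Ω := fun i j =>
      if i = j then (∅ : Set Ω) else {ω | |R i ω| > ε*x} ∩ {ω | |R j ω| > ε*x} with hC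
    have key : ℙ {ω | Real.sqrt (∑ j, (R j ω) ^ 2) > x} ≤
        (∑ j, ℙ {ω | |R j ω| > β*x})
          + (∑ j, ℙ {ω | |R j ω| > ε*x}) * (∑ j, ℙ {ω | |R j ω| > ε*x}) := by
      calc ℙ {ω | Real.sqrt (∑ j, (R j ω) ^ 2) > x}
          ≤ ℙ ((⋃ j, {ω | |R j ω| > β*x}) ∪ ⋃ i, ⋃ j, C i j) := measure_mono (hincl x hx)
        _ ≤ ℙ (⋃ j, {ω | |R j ω| > β*x}) + ℙ (⋃ i, ⋃ j, C i j) := measure_union_le _ _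
        _ ≤ (∑ j, ℙ {ω | |R j ω| > β*x}) + ∑ i, ∑ j, ℙ (C i j) := by
            refine add_le_add (measure_iUnion_fintype_le _ _) ?_
            calc ℙ (⋃ i, ⋃ j, C i j) ≤ ∑ i, ℙ (⋃ j, C i j) := measure_iUnion_fintype_le _ _
            _ ≤ ∑ i, ∑ j, ℙ (C i j) :=
                Finset.sum_le_sum fun i _ => measure_iUnion_fintype_le _ _
        _ ≤ (∑ j, ℙ {ω | |R j ω| > β*x})
            + ∑ i, ∑ j, ℙ {ω | |R i ω| > ε*x} * ℙ {ω | |R j ω| > ε*x} := by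
            refine add_le_add le_rfl (Finset.sum_le_sum fun i _ => Finset.sum_le_sum fun j _ => ?_)
            by_cases hij : i = j
            · simp [hC, hij]
            · rw [hC]; simp only [if_neg hij]; exact le_of_eq (hpair i j hij (ε*x))
        _ = (∑ j, ℙ {ω | |R j ω| > β*x})
            + (∑ i, ℙ {ω | |R i ω| > ε*x}) * (∑ j, ℙ {ω | |R j ω| > ε*x}) := by
            rw [Finset.sum_mul_sum]
    have hA : (∑ j, ℙ {ω | |R j ω| > β*x}) ≠ ⊤ :=
      ENNReal.sum_ne_top.mpr fun j _ => measure_ne_top _ _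
    have hB : (∑ j, ℙ {ω | |R j ω| > ε*x}) ≠ ⊤ :=
      ENNReal.sum_ne_top.mpr fun j _ => measure_ne_top _ _
    calc (ℙ {ω | Real.sqrt (∑ j, (R j ω) ^ 2) > x}).toReal
        ≤ ((∑ j, ℙ {ω | |R j ω| > β*x})
          + (∑ j, ℙ {ω | |R j ω| > ε*x}) * (∑ j, ℙ {ω | |R j ω| > ε*x})).toReal :=
          ENNReal.toReal_mono (ENNReal.add_ne_top.mpr ⟨hA, ENNReal.mul_ne_top hB hB⟩) key
      _ = (∑ j, P j (β*x)) + (∑ j, P j (ε*x)) * (∑ j, P j (ε*x)) := by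
          rw [ENNReal.toReal_add hA (ENNReal.mul_ne_top hB hB), ENNReal.toReal_mul,
            ENNReal.toReal_sum (fun j _ => measure_ne_top _ _),
            ENNReal.toReal_sum (fun j _ => measure_ne_top _ _)]
  -- the upper bound function tends to a limit below S + δ
  have hUBt := (hK1sum β hβpos).add
    ((hK1sum ε hεpos').mul (hsum0.comp (tendsto_id.const_mul_atTop hεpos')))
  have hlim_lt : (∑ j, c j * β ^ (-α)) + (∑ j, c j * ε ^ (-α)) * 0 < (∑ j, c j) + δ := by
    rw [mul_zero, add_zero, ← Finset.sum_mul]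
    rw [hβ]
    linarith
  have hup_ev0 := hUBt.eventually_lt_const hlim_lt
  have hup_ev : ∀ᶠ x in atTop,
      (ℙ {ω | Real.sqrt (∑ j, (R j ω) ^ 2) > x}).toReal / q x < (∑ j, c j) + δ := by
    filter_upwards [hup_ev0, eventually_gt_atTop (0:ℝ)] with x h1 hx
    have hq0 : 0 < q x := hqpos x hx
    have h2 := hFup x hx
    have h3 : (ℙ {ω | Real.sqrt (∑ j, (R j ω) ^ 2) > x}).toReal / q x
        ≤ (∑ j, P j (β*x)) / q x + ((∑ j, P j (ε*x)) / q x) * (∑ j, P j (ε*x)) := by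
      rw [show (∑ j, P j (β*x)) / q x + ((∑ j, P j (ε*x)) / q x) * (∑ j, P j (ε*x))
          = ((∑ j, P j (β*x)) + (∑ j, P j (ε*x)) * (∑ j, P j (ε*x))) / q x from by ring]
      exact (div_le_div_iff_of_pos_right hq0).mpr h2
    exact lt_of_le_of_lt h3 h1
  filter_upwards [hlow_ev, hup_ev] with x h1 h2
  rw [Real.dist_eq, abs_lt]
  simp only [hq] at h1 h2
  constructor <;> linarith
end
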